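/- arXiv:math/0012204 — 2 statements merged into one kernel-verified Lean document; each statement's English description precedes it below -/
import Mathlib

section
/- Let P be a simple d-polytope and let 2 ≤ k ≤ d−1. Then the set 𝒱_k(P) of vertex sets of k-faces of P is a k-system of G(P); that is, for every k-face F of P the subgraph of G(P) induced by the vertices of F is k-regular, and the vertex set of every k-frame of P is contained in the vertex set of a unique k-face of P. -/
open Set

noncomputable section

/-- `P` is a polytope: the convex hull of a finite set of points. -/
def IsPolytope {d : ℕ} (P : Set (EuclideanSpace ℝ (Fin d))) : Prop :=
  ∃ s : Finset (EuclideanSpace ℝ (Fin d)),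
    P = convexHull ℝ (s : Set (EuclideanSpace ℝ (Fin d)))

/-- The dimension of the affine span of a set. -/
def setDim {d : ℕ} (F : Set (EuclideanSpace ℝ (Fin d))) : ℕ :=
  Module.finrank ℝ (vectorSpan ℝ F)

/-- A face of `P` is an exposed subset of `P` (this includes `∅` and `P` itself). -/
def IsFace {d : ℕ} (P F : Set (EuclideanSpace ℝ (Fin d))) : Prop :=
  IsExposed ℝ P F

/-- A `k`-face is a face whose affine span has dimension `k`. -/
def IsKFace {d : ℕ} (P : Set (EuclideanSpace ℝ (Fin d))) (k : ℕ)
    (F : Set (EuclideanSpace ℝ (Fin d))) : Prop :=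
  IsFace P F ∧ setDim F = k

/-- The type of vertices of `P` (points whose singleton is a face, i.e. the `0`-faces). -/
abbrev Vtx {d : ℕ} (P : Set (EuclideanSpace ℝ (Fin d))) : Type :=
  {v : EuclideanSpace ℝ (Fin d) // IsFace P {v}}

/-- The graph of the polytope `P`: two vertices are adjacent iff the segment
between them is an edge (`1`-face) of `P`. -/
def polyGraph {d : ℕ} (P : Set (EuclideanSpace ℝ (Fin d))) : SimpleGraph (Vtx P) where
  Adj u v := u ≠ v ∧
    IsFace P (segment ℝ (u : EuclideanSpace ℝ (Fin d)) (v : EuclideanSpace ℝ (Fin d)))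
  symm := by
    constructor
    rintro u v ⟨h1, h2⟩
    exact ⟨h1.symm, by rwa [segment_symm]⟩
  loopless := by constructor; rintro v ⟨h1, _⟩; exact h1 rfl

/-- `P` is a simple `d`-polytope (in `ℝ^d`): a polytope whose affine span has
dimension `d` and each of whose vertices is incident to exactly `d` edges. -/
def IsSimplePolytope {d : ℕ} (P : Set (EuclideanSpace ℝ (Fin d))) : Prop :=
  IsPolytope P ∧ setDim P = d ∧ ∀ v : Vtx P, ((polyGraph P).neighborSet v).ncard = d

/-- `O` is an orientation of the simple graph `G`: each edge gets exactly one direction,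
and only edges are directed. -/
def IsOrientation {V : Type*} (G : SimpleGraph V) (O : V → V → Prop) : Prop :=
  (∀ u v, O u v → G.Adj u v) ∧ (∀ u v, G.Adj u v → (O u v ↔ ¬ O v u))

/-- `O` is acyclic: there is no directed cycle. -/
def AcyclicOrientation {V : Type*} (O : V → V → Prop) : Prop :=
  ∀ v, ¬ Relation.TransGen O v v

/-- `v` is a sink of the subgraph induced on `W`, under the orientation `O`. -/
def IsSinkOn {V : Type*} (O : V → V → Prop) (W : Set V) (v : V) : Prop :=
  v ∈ W ∧ ∀ u ∈ W, ¬ O v u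

/-- The in-degree of `v` under `O`. -/
def inDeg {V : Type*} (O : V → V → Prop) (v : V) : ℕ := {u | O u v}.ncard

/-- `hNum O i` is the number of vertices of in-degree exactly `i` under `O`. -/
def hNum {V : Type*} (O : V → V → Prop) (i : ℕ) : ℕ := {v | inDeg O v = i}.ncard

/-- `Hk O k = Σ_v C(indeg_O(v), k)`. -/
def Hk {V : Type*} [Fintype V] (O : V → V → Prop) (k : ℕ) : ℕ :=
  ∑ v : V, (inDeg O v).choose k

/-- The subgraph of `G` induced on `S` is `k`-regular. -/
def InducedKRegular {V : Type*} (G : SimpleGraph V) (k : ℕ) (S : Set V) : Prop :=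
  ∀ v ∈ S, (S ∩ G.neighborSet v).ncard = k

/-- `𝒮` is a `k`-system of `G`: every member induces a `k`-regular subgraph, and the
node set of every `k`-frame (a root together with `k` of its neighbors) is contained
in a unique member of `𝒮`. -/
def IsKSystem {V : Type*} (G : SimpleGraph V) (k : ℕ) (𝒮 : Set (Set V)) : Prop :=
  (∀ S ∈ 𝒮, InducedKRegular G k S) ∧
  (∀ (r : V) (N : Finset V), N.card = k → (∀ w ∈ N, G.Adj r w) →
    ∃! S, S ∈ 𝒮 ∧ insert r (N : Set V) ⊆ S)

/-- The set of vertices of `P` lying in `F`. -/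
def faceVerts {d : ℕ} (P F : Set (EuclideanSpace ℝ (Fin d))) : Set (Vtx P) :=
  {v : Vtx P | (v : EuclideanSpace ℝ (Fin d)) ∈ F}

/-- The set of vertex sets of `k`-faces of `P`. -/
def kFaceSets {d : ℕ} (P : Set (EuclideanSpace ℝ (Fin d))) (k : ℕ) : Set (Set (Vtx P)) :=
  {W | ∃ F, IsKFace P k F ∧ W = faceVerts P F}

/-- `f_k(P)`, the number of `k`-faces of `P`. -/
def numKFaces {d : ℕ} (P : Set (EuclideanSpace ℝ (Fin d))) (k : ℕ) : ℕ :=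
  {F : Set (EuclideanSpace ℝ (Fin d)) | IsKFace P k F}.ncard

/-- `O` is an AOF-orientation of the graph of `P`: an acyclic orientation inducing a
unique sink on the subgraph induced by the vertex set of every nonempty face of `P`. -/
def IsAOF {d : ℕ} (P : Set (EuclideanSpace ℝ (Fin d))) (O : Vtx P → Vtx P → Prop) : Prop :=
  IsOrientation (polyGraph P) O ∧ AcyclicOrientation O ∧
  ∀ F : Set (EuclideanSpace ℝ (Fin d)), IsFace P F → F.Nonempty →
    ∃! v : Vtx P, IsSinkOn O (faceVerts P F) v


open scoped Classical

variable {d : ℕ}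

local notation "E" => EuclideanSpace ℝ (Fin d)

/-- The argmax set of a linear functional over a finite convex hull. -/
lemma argmax_convexHull (s : Finset (EuclideanSpace ℝ (Fin d)))
    (l : EuclideanSpace ℝ (Fin d) →L[ℝ] ℝ) (hs : s.Nonempty) :
    {x ∈ convexHull ℝ (s : Set (EuclideanSpace ℝ (Fin d))) |
        ∀ y ∈ convexHull ℝ (s : Set (EuclideanSpace ℝ (Fin d))), l y ≤ l x}
      = convexHull ℝ ((s.filter fun x => ∀ y ∈ s, l y ≤ l x : Finset _) :
          Set (EuclideanSpace ℝ (Fin d))) := by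
  obtain ⟨x₀, hx₀s, hx₀max⟩ := s.exists_max_image l hs
  set t := s.filter fun x => ∀ y ∈ s, l y ≤ l x with ht
  have hts : t ⊆ s := Finset.filter_subset _ _
  have hx₀t : x₀ ∈ t := Finset.mem_filter.2 ⟨hx₀s, hx₀max⟩
  -- value on t is constant = l x₀
  have hval : ∀ x ∈ t, l x = l x₀ := by
    intro x hx
    rw [Finset.mem_filter] at hx
    exact le_antisymm (hx₀max x hx.1) (hx.2 x₀ hx₀s)
  have hle_hull : ∀ y ∈ convexHull ℝ (s : Set _), l y ≤ l x₀ := by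
    intro y hy
    have : (s : Set _) ⊆ {z | l z ≤ l x₀} := fun z hz => hx₀max z hz
    have h2 : convexHull ℝ (s : Set _) ⊆ {z | l z ≤ l x₀} :=
      convexHull_min this (convex_halfSpace_le ⟨map_add l, map_smul l⟩ _)
    exact h2 hy
  apply Set.Subset.antisymm
  · rintro x ⟨hxP, hxmax⟩
    have hlx : l x = l x₀ := le_antisymm (hle_hull x hxP)
      (hxmax x₀ (subset_convexHull ℝ _ hx₀s))
    rw [Finset.convexHull_eq] at hxP
    obtain ⟨w, hw0, hw1, hwx⟩ := hxP
    -- every y with w y ≠ 0 has l y = l x₀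
    have hkey : ∀ y ∈ s, w y ≠ 0 → y ∈ t := by
      intro y hys hwy
      have hsum : ∑ y ∈ s, w y * (l x₀ - l y) = 0 := by
        have h1 : ∑ y ∈ s, w y * l y = l x := by
          rw [← hwx, Finset.centerMass_eq_of_sum_1 _ _ hw1]
          simp [map_sum, map_smul]
        have h2 : ∑ y ∈ s, w y * l x₀ = l x₀ := by
          rw [← Finset.sum_mul, hw1, one_mul]
        simp only [mul_sub]
        rw [Finset.sum_sub_distrib, h1, h2, hlx, sub_self]
      have hnn : ∀ y ∈ s, 0 ≤ w y * (l x₀ - l y) := fun y hy =>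
        mul_nonneg (hw0 y hy) (sub_nonneg.2 (hx₀max y hy))
      have := (Finset.sum_eq_zero_iff_of_nonneg hnn).1 hsum y hys
      have hly : l y = l x₀ := by
        rcases mul_eq_zero.1 this with h | h
        · exact absurd h hwy
        · linarith [sub_eq_zero.1 h]
      refine Finset.mem_filter.2 ⟨hys, fun z hz => ?_⟩
      rw [hly]; exact hx₀max z hz
    -- x is a convex combination of t
    have hsum_t : ∑ y ∈ t, w y = 1 := by
      rw [← hw1]
      apply Finset.sum_subset hts
      intro y hy hyt
      by_contra h
      exact hyt (hkey y hy h)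
    have hcm : t.centerMass w id = s.centerMass w id := by
      rw [Finset.centerMass_eq_of_sum_1 _ _ hsum_t, Finset.centerMass_eq_of_sum_1 _ _ hw1]
      apply Finset.sum_subset hts
      intro y hy hyt
      have : w y = 0 := by
        by_contra h; exact hyt (hkey y hy h)
      simp [this]
    rw [← hwx, ← hcm]
    exact t.centerMass_mem_convexHull (fun y hy => hw0 y (hts hy)) (by rw [hsum_t]; norm_num)
      (fun y hy => Finset.mem_coe.2 hy)
  · intro x hx
    have hxs : x ∈ convexHull ℝ (s : Set _) := convexHull_mono (by exact_mod_cast hts) hx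
    have hlx : l x = l x₀ := by
      have hsub : (t : Set _) ⊆ {z | l z = l x₀} := fun z hz => hval z hz
      have : convexHull ℝ (t : Set _) ⊆ {z | l z = l x₀} :=
        convexHull_min hsub (convex_hyperplane ⟨map_add l, map_smul l⟩ _)
      exact this hx
    exact ⟨hxs, fun y hy => by rw [hlx]; exact hle_hull y hy⟩

/-- A nonempty exposed face of a polytope is the hull of the original points it contains. -/
lemma face_eq_hull_filter {s : Finset (EuclideanSpace ℝ (Fin d))} {F : Set (EuclideanSpace ℝ (Fin d))}
    (hF : IsExposed ℝ (convexHull ℝ (s : Set E)) F) (hne : F.Nonempty) :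
    F = convexHull ℝ ((s.filter fun x => x ∈ F : Finset _) : Set E) := by
  obtain ⟨l, hl⟩ := hF hne
  have hs : s.Nonempty := by
    rcases hne with ⟨x, hx⟩
    rw [hl] at hx
    by_contra h
    rw [Finset.not_nonempty_iff_eq_empty] at h
    subst h
    simp at hx
  have h1 := argmax_convexHull s l hs
  have heq : s.filter (fun x => ∀ y ∈ s, l y ≤ l x) = s.filter (fun x => x ∈ F) := by
    apply Finset.filter_congr
    intro x hxs
    constructor
    · intro hmax
      have : x ∈ convexHull ℝ ((s.filter fun x => ∀ y ∈ s, l y ≤ l x : Finset _) : Set E) :=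
        subset_convexHull ℝ _ (by exact_mod_cast Finset.mem_filter.2 ⟨hxs, hmax⟩)
      rw [← h1] at this
      rw [hl]; exact this
    · intro hxF
      rw [hl] at hxF
      intro y hy
      exact hxF.2 y (subset_convexHull ℝ _ hy)
  conv_lhs => rw [hl]
  rw [h1, heq]

/-- The functional is constant on an exposed face. -/
lemma const_on_face {P F : Set (EuclideanSpace ℝ (Fin d))} {l : EuclideanSpace ℝ (Fin d) →L[ℝ] ℝ}
    (hl : F = {x ∈ P | ∀ y ∈ P, l y ≤ l x}) {x y : EuclideanSpace ℝ (Fin d)}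
    (hx : x ∈ F) (hy : y ∈ F) : l x = l y := by
  rw [hl] at hx hy
  exact le_antisymm (hy.2 x hx.1) (hx.2 y hy.1)

/-- Transitivity of faces for polytopes. -/
lemma face_trans {s : Finset (EuclideanSpace ℝ (Fin d))} {F G : Set (EuclideanSpace ℝ (Fin d))}
    (hF : IsExposed ℝ (convexHull ℝ (s : Set E)) F) (hG : IsExposed ℝ F G) :
    IsExposed ℝ (convexHull ℝ (s : Set E)) G := by
  intro hGne
  have hFne : F.Nonempty := hGne.mono hG.subset
  obtain ⟨l, hl⟩ := hF hFne
  obtain ⟨m, hm⟩ := hG hGne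
  set P := convexHull ℝ (s : Set E) with hP
  set t := s.filter (fun x => x ∈ F) with htdef
  have htF : F = convexHull ℝ (t : Set E) := face_eq_hull_filter hF hFne
  have hts : t ⊆ s := Finset.filter_subset _ _
  have htne : t.Nonempty := by
    by_contra h
    rw [Finset.not_nonempty_iff_eq_empty] at h
    rw [h] at htF; simp at htF
    rw [htF] at hFne; exact Set.not_nonempty_empty hFne
  obtain ⟨x₁, hx₁⟩ := hFne
  have hlconst : ∀ x ∈ F, l x = l x₁ := fun x hx => const_on_face hl hx hx₁
  -- choose ε
  by_cases hA : s.filter (fun x => x ∉ F) = ∅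
  · -- F ⊇ s, so F = P and G is directly exposed
    have hsF : ∀ x ∈ s, x ∈ F := by
      intro x hx
      by_contra h
      have : x ∈ s.filter (fun x => x ∉ F) := Finset.mem_filter.2 ⟨hx, h⟩
      rw [hA] at this; exact absurd this (Finset.notMem_empty x)
    have hPF : P = F := by
      apply Set.Subset.antisymm
      · rw [htF]
        apply convexHull_mono
        intro x hx
        exact Finset.mem_coe.2 (Finset.mem_filter.2 ⟨Finset.mem_coe.1 hx, hsF x (Finset.mem_coe.1 hx)⟩)
      · exact hF.subset
    exact ⟨m, by rw [hm, hPF]⟩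
  · -- general case: perturb
    replace hA := Finset.nonempty_of_ne_empty hA
    set A := s.filter (fun x => x ∉ F) with hAdef
    obtain ⟨a₀, ha₀A, ha₀max⟩ := A.exists_max_image l hA
    have hgap : l a₀ < l x₁ := by
      have ha₀s : a₀ ∈ s := (Finset.filter_subset _ _) ha₀A
      have ha₀P : a₀ ∈ P := subset_convexHull ℝ _ ha₀s
      have hle : l a₀ ≤ l x₁ := by
        rw [hl] at hx₁; exact hx₁.2 a₀ ha₀P
      rcases lt_or_eq_of_le hle with h | h
      · exact h
      · exfalso
        have : a₀ ∈ F := by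
          rw [hl]
          refine ⟨ha₀P, fun y hy => ?_⟩
          rw [h]
          rw [hl] at hx₁; exact hx₁.2 y hy
        have := Finset.mem_filter.1 ha₀A
        exact this.2 ‹a₀ ∈ F›
    set γ := l x₁ - l a₀ with hγdef
    have hγ : 0 < γ := by simp [hγdef]; linarith
    have hs : s.Nonempty := by
      obtain ⟨x, hx⟩ := htne; exact ⟨x, hts hx⟩
    obtain ⟨mM, hmMs, hmMmax⟩ := s.exists_max_image m hs
    obtain ⟨mm, hmms, hmmmin⟩ := s.exists_min_image m hs
    set osc := m mM - m mm with hosc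
    have hoscnn : 0 ≤ osc := sub_nonneg.2 (hmmmin mM hmMs)
    set ε := γ / (2 * (osc + 1)) with hεdef
    have hε : 0 < ε := by positivity
    set f := l + ε • m with hfdef
    have hfval : ∀ x : EuclideanSpace ℝ (Fin d), f x = l x + ε * m x := by
      intro x; simp [hfdef]
    -- on t, f = l x₁ + ε m x
    have hlt : ∀ x ∈ t, l x = l x₁ := by
      intro x hx
      exact hlconst x ((Finset.mem_filter.1 hx).2)
    -- the f-argmax over s lies in t and is the m-argmax over t
    have hkey : s.filter (fun x => ∀ y ∈ s, f y ≤ f x)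
        = t.filter (fun x => ∀ y ∈ t, m y ≤ m x) := by
      have hcompare : ∀ x ∈ A, ∀ y ∈ t, f x < f y := by
        intro x hxA y hyt
        have hxs : x ∈ s := (Finset.filter_subset _ _) hxA
        have hys : y ∈ s := hts hyt
        have h1 : l x ≤ l a₀ := ha₀max x hxA
        have h2 : l y = l x₁ := hlt y hyt
        have h3 : ε * m x - ε * m y ≤ ε * osc := by
          have : m x - m y ≤ osc := by
            have := hmMmax x hxs
            have := hmmmin y hys
            simp only [hosc]; linarith
          have := mul_le_mul_of_nonneg_left this hε.le
          linarith [this]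
        have h4 : ε * osc < γ := by
          rw [hεdef]
          rw [div_mul_eq_mul_div, div_lt_iff₀ (by positivity)]
          nlinarith
        rw [hfval, hfval, h2]
        have : l x + ε * m x < l a₀ + γ + ε * m y := by linarith
        simp only [hγdef] at this
        linarith
      apply Finset.ext
      intro x
      simp only [Finset.mem_filter]
      constructor
      · rintro ⟨hxs, hxmax⟩
        have hxt : x ∈ t := by
          by_contra h
          have hxA : x ∈ A := Finset.mem_filter.2 ⟨hxs, by
            intro hF; exact h (Finset.mem_filter.2 ⟨hxs, hF⟩)⟩
          obtain ⟨y, hyt⟩ := htne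
          exact absurd (hxmax y (hts hyt)) (not_le.2 (hcompare x hxA y hyt))
        refine ⟨hxt, fun y hy => ?_⟩
        have := hxmax y (hts hy)
        rw [hfval, hfval, hlt x hxt, hlt y hy] at this
        have hεpos := hε
        nlinarith
      · rintro ⟨hxt, hxmax⟩
        refine ⟨hts hxt, fun y hy => ?_⟩
        by_cases hyF : y ∈ F
        · have hyt : y ∈ t := Finset.mem_filter.2 ⟨hy, hyF⟩
          rw [hfval, hfval, hlt x hxt, hlt y hyt]
          have := hxmax y hyt
          nlinarith
        · exact (hcompare y (Finset.mem_filter.2 ⟨hy, hyF⟩) x hxt).le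
    refine ⟨f, ?_⟩
    rw [argmax_convexHull s f hs, hkey]
    -- now: G = conv (t.filter m-argmax)
    have hGt : G = convexHull ℝ ((t.filter fun x => x ∈ G : Finset _) : Set _) := by
      have : IsExposed ℝ (convexHull ℝ ((t : Set _)) ) G := by rw [← htF]; exact hG
      exact face_eq_hull_filter this hGne
    have heq2 : t.filter (fun x => ∀ y ∈ t, m y ≤ m x) = t.filter (fun x => x ∈ G) := by
      apply Finset.filter_congr
      intro x hxt
      have hxF : x ∈ F := (Finset.mem_filter.1 hxt).2
      constructor
      · intro hmax
        rw [hm]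
        refine ⟨hxF, fun y hy => ?_⟩
        have hyconv : y ∈ convexHull ℝ (t : Set _) := by rw [← htF]; exact hy
        have hsub : convexHull ℝ (t : Set _) ⊆ {z | m z ≤ m x} :=
          convexHull_min (fun z hz => hmax z (Finset.mem_coe.1 hz))
            (convex_halfSpace_le ⟨map_add m, map_smul m⟩ _)
        exact hsub hyconv
      · intro hxG
        rw [hm] at hxG
        intro y hy
        exact hxG.2 y (by rw [htF]; exact subset_convexHull ℝ _ (Finset.mem_coe.2 hy))
    rw [heq2, ← hGt]

/-- Exposed points of a polytope belong to the generating set. -/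
lemma vtx_mem_gen {s : Finset (EuclideanSpace ℝ (Fin d))} {v : EuclideanSpace ℝ (Fin d)}
    (hv : IsExposed ℝ (convexHull ℝ (s : Set E)) {v}) : v ∈ s := by
  have h := face_eq_hull_filter hv ⟨v, rfl⟩
  by_cases hne : (s.filter fun x => x ∈ ({v} : Set _)) = ∅
  · simp at h
    rw [Finset.filter_eq_empty_iff] at hne
    have hempty : {x | x ∈ s ∧ x = v} = (∅ : Set E) := by
      ext x
      simp only [mem_setOf_eq, mem_empty_iff_false, iff_false, not_and]
      intro hx hxv; exact hne hx hxv
    rw [hempty, convexHull_empty] at h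
    exact absurd h (Set.singleton_ne_empty v)
  · obtain ⟨x, hx⟩ := Finset.nonempty_of_ne_empty hne
    rw [Finset.mem_filter] at hx
    have : x = v := hx.2
    rw [← this]; exact hx.1

/-- Extreme points of a polytope are exposed points. -/
lemma extreme_isExposed {s : Finset (EuclideanSpace ℝ (Fin d))} {v : EuclideanSpace ℝ (Fin d)}
    (hv : v ∈ (convexHull ℝ (s : Set E)).extremePoints ℝ) :
    IsExposed ℝ (convexHull ℝ (s : Set E)) {v} := by
  have hvs : v ∈ s := extremePoints_convexHull_subset hv
  have hnotin : v ∉ convexHull ℝ ((s.erase v : Finset _) : Set E) := by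
    intro hin
    have hsub : (s : Set E) ⊆ convexHull ℝ ((s.erase v : Finset _) : Set E) := by
      intro x hx
      by_cases hxv : x = v
      · rw [hxv]; exact hin
      · exact subset_convexHull ℝ _ (Finset.mem_coe.2 (Finset.mem_erase.2 ⟨hxv, Finset.mem_coe.1 hx⟩))
    have heq : convexHull ℝ (s : Set E) = convexHull ℝ ((s.erase v : Finset _) : Set E) := by
      apply Set.Subset.antisymm
      · exact convexHull_min hsub (convex_convexHull ℝ _)
      · exact convexHull_mono (by exact_mod_cast Finset.erase_subset v s)
    rw [heq] at hv
    have := extremePoints_convexHull_subset hv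
    simp at this
  obtain ⟨f, u, hfa, hfv⟩ := geometric_hahn_banach_closed_point
    (convex_convexHull ℝ _) ((Set.Finite.isCompact_convexHull ℝ (Finset.finite_toSet _)).isClosed)
    hnotin
  intro _
  refine ⟨f, ?_⟩
  have hstrict : ∀ y ∈ s, y ≠ v → f y < f v := by
    intro y hy hyv
    have : y ∈ convexHull ℝ ((s.erase v : Finset _) : Set E) :=
      subset_convexHull ℝ _ (Finset.mem_coe.2 (Finset.mem_erase.2 ⟨hyv, hy⟩))
    exact (hfa y this).trans hfv
  have hs : s.Nonempty := ⟨v, hvs⟩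
  rw [argmax_convexHull s f hs]
  have : s.filter (fun x => ∀ y ∈ s, f y ≤ f x) = {v} := by
    apply Finset.ext
    intro x
    simp only [Finset.mem_filter, Finset.mem_singleton]
    constructor
    · rintro ⟨hxs, hxmax⟩
      by_contra h
      exact absurd (hxmax v hvs) (not_le.2 (hstrict x hxs h))
    · intro hxv
      rw [hxv]
      refine ⟨hvs, fun y hy => ?_⟩
      by_cases hyv : y = v
      · rw [hyv]
      · exact (hstrict y hy hyv).le
  rw [this]
  simp

/-- Minkowski: a polytope is the hull of its extreme points. -/
lemma poly_eq_hull_extremePoints (s : Finset (EuclideanSpace ℝ (Fin d))) :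
    convexHull ℝ (s : Set E)
      = convexHull ℝ ((convexHull ℝ (s : Set E)).extremePoints ℝ) := by
  have hext : (convexHull ℝ (s : Set E)).extremePoints ℝ ⊆ s := extremePoints_convexHull_subset
  have hfin : ((convexHull ℝ (s : Set E)).extremePoints ℝ).Finite :=
    Set.Finite.subset (Finset.finite_toSet s) hext
  have hclosed : IsClosed (convexHull ℝ ((convexHull ℝ (s : Set E)).extremePoints ℝ)) :=
    (hfin.isCompact_convexHull ℝ).isClosed
  have := closure_convexHull_extremePoints
    (Set.Finite.isCompact_convexHull ℝ (Finset.finite_toSet s)) (convex_convexHull ℝ _)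
  conv_lhs => rw [← this]
  rw [hclosed.closure_eq]

set_option maxHeartbeats 1000000 in
/-- Tangent cone at a vertex is generated by edge directions. -/
lemma cone_at_vertex {s : Finset (EuclideanSpace ℝ (Fin d))} {v : EuclideanSpace ℝ (Fin d)}
    (hv : IsExposed ℝ (convexHull ℝ (s : Set E)) {v}) {x : EuclideanSpace ℝ (Fin d)} (hx : x ∈ s) :
    ∃ c : EuclideanSpace ℝ (Fin d) → ℝ, (∀ u, 0 ≤ c u) ∧
      x - v = ∑ u ∈ (s.erase v).filter (fun u => IsExposed ℝ (convexHull ℝ (s : Set E)) {u} ∧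
          IsExposed ℝ (convexHull ℝ (s : Set E)) (segment ℝ v u)), c u • (u - v) := by
  classical
  set P := convexHull ℝ (s : Set E) with hP
  set NbrPts := (s.erase v).filter (fun u => IsExposed ℝ P {u} ∧
          IsExposed ℝ P (segment ℝ v u)) with hNdef
  have hvs : v ∈ s := vtx_mem_gen hv
  -- the cone set
  set C : Set (EuclideanSpace ℝ (Fin d)) :=
    {y | ∃ c : EuclideanSpace ℝ (Fin d) → ℝ, (∀ u, 0 ≤ c u) ∧ y = ∑ u ∈ NbrPts, c u • (u - v)}
    with hCdef
  have hC0 : (0 : EuclideanSpace ℝ (Fin d)) ∈ C := ⟨0, fun _ => le_refl 0, by simp⟩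
  have hCsmul : ∀ (a : ℝ), 0 ≤ a → ∀ y ∈ C, a • y ∈ C := by
    rintro a ha y ⟨c, hc, rfl⟩
    refine ⟨a • c, fun u => mul_nonneg ha (hc u), ?_⟩
    rw [Finset.smul_sum]
    apply Finset.sum_congr rfl
    intro u _
    simp [smul_smul]
  have hCadd : ∀ y ∈ C, ∀ z ∈ C, y + z ∈ C := by
    rintro y ⟨c, hc, rfl⟩ z ⟨c', hc', rfl⟩
    refine ⟨c + c', fun u => add_nonneg (hc u) (hc' u), ?_⟩
    rw [← Finset.sum_add_distrib]
    apply Finset.sum_congr rfl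
    intro u _
    simp [add_smul]
  by_cases hx_v : x = v
  · exact ⟨0, fun _ => le_refl 0, by simp [hx_v]⟩
  -- exposing functional for v, strict on s \ {v}
  obtain ⟨l, hl⟩ := hv ⟨v, rfl⟩
  have hvP : v ∈ P := by
    have : v ∈ ({v} : Set _) := rfl
    rw [hl] at this; exact this.1
  have hlmax : ∀ y ∈ P, l y ≤ l v := by
    have : v ∈ ({v} : Set _) := rfl
    rw [hl] at this; exact this.2
  have hstrict : ∀ y ∈ s, y ≠ v → l y < l v := by
    intro y hy hyv
    have hyP : y ∈ P := subset_convexHull ℝ _ hy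
    rcases lt_or_eq_of_le (hlmax y hyP) with h | h
    · exact h
    · exfalso
      have : y ∈ ({v} : Set _) := by
        rw [hl]; exact ⟨hyP, fun z hz => h ▸ hlmax z hz⟩
      exact hyv this
  set s' := s.erase v with hs'def
  have hxs' : x ∈ s' := Finset.mem_erase.2 ⟨hx_v, hx⟩
  have hs'ne : s'.Nonempty := ⟨x, hxs'⟩
  obtain ⟨z₀, hz₀, hz₀max⟩ := s'.exists_max_image l hs'ne
  obtain ⟨δ, hδ, hgap⟩ : ∃ δ : ℝ, 0 < δ ∧ ∀ y ∈ s', δ ≤ l v - l y := by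
    refine ⟨l v - l z₀, ?_, ?_⟩
    · have := hstrict z₀ (Finset.mem_of_mem_erase hz₀) (Finset.ne_of_mem_erase hz₀)
      linarith
    · intro y hy
      have := hz₀max y hy
      linarith
  have hgappos : ∀ y ∈ s', 0 < l v - l y := fun y hy => hδ.trans_le (hgap y hy)
  set p : EuclideanSpace ℝ (Fin d) → EuclideanSpace ℝ (Fin d) :=
    fun y => v + (δ / (l v - l y)) • (y - v) with hpdef
  set tc : EuclideanSpace ℝ (Fin d) → ℝ := fun y => (l v - l y) / δ with htcdef
  have htcpos : ∀ y ∈ s', 0 < tc y := fun y hy => div_pos (hgappos y hy) hδ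
  have hrecover : ∀ y ∈ s', y - v = tc y • (p y - v) := by
    intro y hy
    have h0 : (l v - l y) ≠ 0 := (hgappos y hy).ne'
    simp only [hpdef, htcdef, add_sub_cancel_left, smul_smul]
    rw [div_mul_div_comm, mul_comm (l v - l y) δ, div_self (mul_ne_zero hδ.ne' h0), one_smul]
  have hlp : ∀ y ∈ s', l (p y) = l v - δ := by
    intro y hy
    have h0 : (l v - l y) ≠ 0 := (hgappos y hy).ne'
    simp only [hpdef, map_add, map_smul, map_sub, smul_eq_mul]
    have h1 : δ / (l v - l y) * (l y - l v) = -δ := by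
      field_simp
      ring
    rw [h1]
    ring
  set Qs := s'.image p with hQsdef
  -- every extreme point of Q comes from a neighbor
  have hextnbr : ∀ q ∈ ((convexHull ℝ (Qs : Set (EuclideanSpace ℝ (Fin d)))).extremePoints ℝ),
      ∃ u ∈ NbrPts, q = p u := by
    intro q hq
    have hqQs : q ∈ Qs := extremePoints_convexHull_subset hq
    obtain ⟨x₀, hx₀s', hx₀q⟩ := Finset.mem_image.1 hqQs
    have hqexp : IsExposed ℝ (convexHull ℝ (Qs : Set _)) {q} := extreme_isExposed hq
    obtain ⟨m, hm⟩ := hqexp ⟨q, rfl⟩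
    have hmmax : ∀ y ∈ convexHull ℝ (Qs : Set _), m y ≤ m q := by
      have h0 : q ∈ ({q} : Set _) := rfl
      rw [hm] at h0; exact h0.2
    have hmstrict : ∀ w ∈ Qs, w ≠ q → m w < m q := by
      intro w hw hwq
      rcases lt_or_eq_of_le (hmmax w (subset_convexHull ℝ _ hw)) with h | h
      · exact h
      · exfalso
        apply hwq
        have : w ∈ ({q} : Set _) := by
          rw [hm]
          exact ⟨subset_convexHull ℝ _ hw, fun z hz => h ▸ hmmax z hz⟩
        exact this
    set c₀ := (m q - m v) / δ with hc₀def
    set n := m + c₀ • l with hndef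
    have hnval : ∀ z, n z = m z + c₀ * l z := fun z => rfl
    have hdiff : ∀ y ∈ s', n y - n v = tc y * (m (p y) - m q) := by
      intro y hy
      have h0 : (l v - l y) ≠ 0 := (hgappos y hy).ne'
      have hmp : m (p y) = m v + δ / (l v - l y) * (m y - m v) := by
        simp only [hpdef, map_add, map_smul, map_sub, smul_eq_mul]
        all_goals ring
      rw [hnval, hnval, hmp]
      simp only [htcdef, hc₀def]
      field_simp
      ring
    have hnmax : ∀ y ∈ s, n y ≤ n v := by
      intro y hy
      by_cases hyv : y = v
      · rw [hyv]
      · have hys' : y ∈ s' := Finset.mem_erase.2 ⟨hyv, hy⟩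
        have h1 : m (p y) ≤ m q :=
          hmmax _ (subset_convexHull ℝ _ (Finset.mem_coe.2 (Finset.mem_image_of_mem p hys')))
        have h2 := hdiff y hys'
        have h3 : n y - n v ≤ 0 := by
          rw [h2]
          exact mul_nonpos_of_nonneg_of_nonpos (htcpos y hys').le (by linarith)
        linarith
    set D := s'.filter (fun y => p y = q) with hDdef
    have hx₀D : x₀ ∈ D := Finset.mem_filter.2 ⟨hx₀s', hx₀q⟩
    have hfilterchar : s.filter (fun y => ∀ z ∈ s, n z ≤ n y) = insert v D := by
      ext y
      simp only [Finset.mem_filter, Finset.mem_insert]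
      constructor
      · rintro ⟨hys, hymax⟩
        by_cases hyv : y = v
        · left; exact hyv
        · right
          have hys' : y ∈ s' := Finset.mem_erase.2 ⟨hyv, hys⟩
          have h1 : n v ≤ n y := hymax v hvs
          have h2 : n y ≤ n v := hnmax y hys
          have h3 : n y - n v = 0 := by linarith
          rw [hdiff y hys'] at h3
          have h4 : m (p y) - m q = 0 := by
            rcases mul_eq_zero.1 h3 with h | h
            · exact absurd h (htcpos y hys').ne'
            · exact h
          have h5 : p y = q := by
            by_contra hne
            have := hmstrict (p y) (Finset.mem_image_of_mem p hys') hne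
            linarith
          exact Finset.mem_filter.2 ⟨hys', h5⟩
      · intro hy
        rcases hy with rfl | hyD
        · exact ⟨hvs, fun z hz => hnmax z hz⟩
        · have hmem := Finset.mem_filter.1 hyD
          have h0 : n y = n v := by
            have h1 := hdiff y hmem.1
            rw [hmem.2] at h1
            simp at h1
            linarith
          refine ⟨Finset.mem_of_mem_erase hmem.1, fun z hz => ?_⟩
          rw [h0]
          exact hnmax z hz
    obtain ⟨xs, hxsD, hxsmin⟩ := D.exists_min_image l ⟨x₀, hx₀D⟩
    have hxs_s' : xs ∈ s' := (Finset.mem_filter.1 hxsD).1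
    have hpxs : p xs = q := (Finset.mem_filter.1 hxsD).2
    have htcmax : ∀ y ∈ D, tc y ≤ tc xs := by
      intro y hyD
      have h1 := hxsmin y hyD
      simp only [htcdef]
      gcongr <;> linarith
    have hdirD : ∀ y ∈ D, y - v = tc y • (q - v) := by
      intro y hyD
      have h1 := hrecover y (Finset.mem_filter.1 hyD).1
      rw [(Finset.mem_filter.1 hyD).2] at h1
      exact h1
    have hseg : convexHull ℝ ((insert v D : Finset _) : Set (EuclideanSpace ℝ (Fin d)))
        = segment ℝ v xs := by
      apply Set.Subset.antisymm
      · apply convexHull_min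
        · intro y hy
          rcases Finset.mem_insert.1 (Finset.mem_coe.1 hy) with rfl | hyD
          · exact left_mem_segment ℝ _ _
          · rw [segment_eq_image']
            have hys' := (Finset.mem_filter.1 hyD).1
            refine ⟨tc y / tc xs, ⟨div_nonneg (htcpos y hys').le (htcpos xs hxs_s').le,
              div_le_one_of_le₀ (htcmax y hyD) (htcpos xs hxs_s').le⟩, ?_⟩
            have h1 : xs - v = tc xs • (q - v) := hdirD xs hxsD
            have h2 : y - v = tc y • (q - v) := hdirD y hyD
            show v + (tc y / tc xs) • (xs - v) = y
            rw [h1, smul_smul, div_mul_cancel₀ _ (htcpos xs hxs_s').ne', ← h2]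
            abel
        · exact convex_segment v xs
      · rw [← convexHull_pair]
        apply convexHull_mono
        intro z hz
        rcases hz with rfl | rfl
        · exact Finset.mem_coe.2 (Finset.mem_insert_self _ _)
        · exact Finset.mem_coe.2 (Finset.mem_insert_of_mem hxsD)
    have hsne : s.Nonempty := ⟨v, hvs⟩
    have hFexp : IsExposed ℝ P (segment ℝ v xs) := by
      intro _
      refine ⟨n, ?_⟩
      have harg := argmax_convexHull s n hsne
      rw [hP, harg, hfilterchar, hseg]
    have hxs_v : xs ≠ v := Finset.ne_of_mem_erase hxs_s'
    have hlxs : l xs < l v := hstrict xs (Finset.mem_of_mem_erase hxs_s') hxs_v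
    have hvertex_xs : IsExposed ℝ (segment ℝ v xs) {xs} := by
      intro _
      refine ⟨-l, ?_⟩
      apply Set.Subset.antisymm
      · intro z hz
        rw [mem_singleton_iff] at hz
        rw [hz]
        refine ⟨right_mem_segment ℝ v xs, ?_⟩
        intro y hy
        rw [segment_eq_image'] at hy
        obtain ⟨θ, ⟨hθ0, hθ1⟩, rfl⟩ := hy
        simp only [ContinuousLinearMap.neg_apply, map_add, map_smul, map_sub, smul_eq_mul]
        nlinarith
      · rintro z ⟨hzseg, hzmax⟩
        rw [segment_eq_image'] at hzseg
        obtain ⟨θ, ⟨hθ0, hθ1⟩, rfl⟩ := hzseg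
        have h1 := hzmax xs (right_mem_segment ℝ v xs)
        simp only [ContinuousLinearMap.neg_apply, map_add, map_smul, map_sub, smul_eq_mul] at h1
        have hθ1' : θ = 1 := by nlinarith
        rw [mem_singleton_iff, hθ1']
        show v + (1:ℝ) • (xs - v) = xs
        rw [one_smul]
        abel
    have hxs_exp : IsExposed ℝ P {xs} := by
      have hF' : IsExposed ℝ (convexHull ℝ (s : Set _)) (segment ℝ v xs) := by
        rw [← hP]; exact hFexp
      have := face_trans hF' hvertex_xs
      rw [← hP] at this
      exact this
    refine ⟨xs, ?_, hpxs.symm⟩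
    exact Finset.mem_filter.2 ⟨hxs_s', hxs_exp, hFexp⟩
  -- conclude
  have hQC : convexHull ℝ (Qs : Set (EuclideanSpace ℝ (Fin d))) ⊆ {z | z - v ∈ C} := by
    conv_lhs => rw [poly_eq_hull_extremePoints Qs]
    apply convexHull_min
    · intro q hq
      obtain ⟨u, huN, rfl⟩ := hextnbr q hq
      have hus' : u ∈ s' := Finset.mem_of_mem_filter u huN
      refine mem_setOf_eq ▸ ?_
      refine ⟨fun w => if w = u then δ / (l v - l u) else 0, ?_, ?_⟩
      · intro w
        dsimp only
        by_cases h : w = u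
        · rw [if_pos h]
          exact (div_pos hδ (hgappos u hus')).le
        · rw [if_neg h]
      · dsimp only
        simp only [ite_smul, zero_smul]
        rw [Finset.sum_ite_eq' NbrPts u (fun w => (δ / (l v - l u)) • (w - v)), if_pos huN]
        simp only [hpdef]
        rw [add_sub_cancel_left]
    · intro y hy z hz a b ha hb hab
      simp only [mem_setOf_eq] at *
      have hkey : a • y + b • z - v = a • (y - v) + b • (z - v) := by
        have h2 : v = a • v + b • v := by rw [← add_smul, hab, one_smul]
        nth_rewrite 1 [h2]
        module
      rw [hkey]
      exact hCadd _ (hCsmul a ha _ hy) _ (hCsmul b hb _ hz)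
  have hpxQ : p x ∈ convexHull ℝ (Qs : Set (EuclideanSpace ℝ (Fin d))) :=
    subset_convexHull ℝ _ (Finset.mem_coe.2 (Finset.mem_image_of_mem p hxs'))
  have hpxC : p x - v ∈ C := hQC hpxQ
  have hxC : x - v ∈ C := by
    rw [hrecover x hxs']
    exact hCsmul _ (htcpos x hxs').le _ hpxC
  obtain ⟨c, hc, hcsum⟩ := hxC
  exact ⟨c, hc, hcsum⟩

set_option maxHeartbeats 1600000 in
/-- Master lemma: classification of the faces through a vertex of a simple polytope. -/
lemma vertex_master {s : Finset (EuclideanSpace ℝ (Fin d))}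
    (hdim : setDim (convexHull ℝ (s : Set E)) = d)
    (v : Vtx (convexHull ℝ (s : Set E)))
    (hdeg : (((polyGraph (convexHull ℝ (s : Set E))).neighborSet v)).ncard = d) :
    ∃ nb : Finset (Vtx (convexHull ℝ (s : Set E))),
      ((nb : Set (Vtx (convexHull ℝ (s : Set E))))
          = (polyGraph (convexHull ℝ (s : Set E))).neighborSet v) ∧
      ∃ Φ : Finset {u : Vtx (convexHull ℝ (s : Set E)) // u ∈ nb} → Set (EuclideanSpace ℝ (Fin d)),
        (∀ T, IsFace (convexHull ℝ (s : Set E)) (Φ T) ∧ ((v : E) ∈ Φ T) ∧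
            setDim (Φ T) = T.card ∧
            ∀ i : {u : Vtx (convexHull ℝ (s : Set E)) // u ∈ nb},
              (((i : Vtx (convexHull ℝ (s : Set E))) : E) ∈ Φ T ↔ i ∈ T)) ∧
        (∀ F, IsFace (convexHull ℝ (s : Set E)) F → ((v : E) ∈ F) → ∃ T, F = Φ T) := by
  classical
  revert hdeg
  revert v
  set P := convexHull ℝ (s : Set E) with hPdef
  intro v hdeg
  have hv : IsExposed ℝ P {(v : E)} := v.2
  have hvs : (v : E) ∈ s := vtx_mem_gen hv
  set nbPts : Finset (EuclideanSpace ℝ (Fin d)) :=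
    (s.erase (v : E)).filter (fun u => IsExposed ℝ P {u} ∧ IsExposed ℝ P (segment ℝ (v : E) u))
    with hnbPts
  have hmemVtx : ∀ u ∈ nbPts, IsFace P {u} := fun u hu => (Finset.mem_filter.1 hu).2.1
  set nb : Finset (Vtx P) := nbPts.attach.image
    (fun u => (⟨u.1, hmemVtx u.1 u.2⟩ : Vtx P)) with hnbdef
  have hnbchar : ∀ w : Vtx P, w ∈ nb ↔ (w : E) ∈ nbPts := by
    intro w
    constructor
    · intro hw
      obtain ⟨u, _, hu2⟩ := Finset.mem_image.1 hw
      rw [← hu2]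
      exact u.2
    · intro hw
      exact Finset.mem_image.2 ⟨⟨(w : E), hw⟩, Finset.mem_attach _ _, Subtype.ext rfl⟩
  have hnbset : (nb : Set (Vtx P)) = (polyGraph P).neighborSet v := by
    ext w
    rw [Finset.mem_coe, hnbchar w]
    constructor
    · intro hw
      obtain ⟨hw1, _, hw3⟩ := Finset.mem_filter.1 hw
      refine ⟨?_, hw3⟩
      intro heq
      exact (Finset.ne_of_mem_erase hw1) (by rw [heq])
    · rintro ⟨hne, hseg⟩
      refine Finset.mem_filter.2 ⟨Finset.mem_erase.2 ⟨?_, vtx_mem_gen w.2⟩, w.2, hseg⟩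
      intro heq
      exact hne (Subtype.ext (by rw [heq]))
  have hnbcard : nb.card = d := by
    calc nb.card = (nb : Set (Vtx P)).ncard := (Set.ncard_coe_finset nb).symm
      _ = d := by rw [hnbset]; exact hdeg
  -- the edge directions
  set e : {u : Vtx P // u ∈ nb} → EuclideanSpace ℝ (Fin d) :=
    (fun i => ((i : Vtx P) : E) - (v : E)) with hedef
  have hcardsub : Fintype.card {u : Vtx P // u ∈ nb} = d := by
    rw [Fintype.card_coe, hnbcard]
  -- cone representation over nb
  have hcone : ∀ x ∈ s, ∃ c : {u : Vtx P // u ∈ nb} → ℝ,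
      (∀ i, 0 ≤ c i) ∧ x - (v : E) = ∑ i, c i • e i := by
    intro x hx
    obtain ⟨c, hc, hsum⟩ := cone_at_vertex hv hx
    refine ⟨fun i => c ((i : Vtx P) : E), fun i => hc _, ?_⟩
    rw [hsum]
    rw [show (∑ u ∈ nbPts, c u • (u - (v : E)))
        = ∑ u ∈ nb, c (u : E) • ((u : E) - (v : E)) from ?_]
    · rw [← Finset.sum_attach nb (fun u => c (u : E) • ((u : E) - (v : E)))]
      rfl
    · rw [Finset.sum_image]
      · rw [← Finset.sum_attach nbPts (fun u => c u • (u - (v : E)))]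
      · intro a _ b _ hab
        exact Subtype.ext (congrArg (Subtype.val : Vtx P → EuclideanSpace ℝ (Fin d)) hab)
  -- span equals vectorSpan
  have hvspan : vectorSpan ℝ P = Submodule.span ℝ (Set.range e) := by
    apply le_antisymm
    · have h1 : vectorSpan ℝ P = vectorSpan ℝ (s : Set E) := by
        rw [hPdef, ← direction_affineSpan, affineSpan_convexHull, direction_affineSpan]
      rw [h1, vectorSpan_eq_span_vsub_set_right ℝ (Finset.mem_coe.2 hvs)]
      rw [Submodule.span_le]
      rintro y ⟨x, hxs, rfl⟩
      obtain ⟨c, _, hsum⟩ := hcone x (Finset.mem_coe.1 hxs)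
      show x -ᵥ (v : E) ∈ _
      rw [vsub_eq_sub, hsum]
      exact Submodule.sum_mem _ (fun i _ =>
        Submodule.smul_mem _ _ (Submodule.subset_span (Set.mem_range_self i)))
    · rw [Submodule.span_le]
      rintro y ⟨i, rfl⟩
      have h1 : ((i : Vtx P) : E) ∈ P := by
        have := vtx_mem_gen ((i : Vtx P)).2
        exact subset_convexHull ℝ _ (Finset.mem_coe.2 this)
      have h2 : (v : E) ∈ P := subset_convexHull ℝ _ (Finset.mem_coe.2 hvs)
      have := vsub_mem_vectorSpan ℝ h1 h2
      simpa [hedef] using this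
  have hfr : Module.finrank ℝ (Submodule.span ℝ (Set.range e)) = d := by
    rw [← hvspan]
    exact hdim
  have hli : LinearIndependent ℝ e := by
    rw [linearIndependent_iff_card_eq_finrank_span, hcardsub]
    exact hfr.symm
  have hspantop : Submodule.span ℝ (Set.range e) = ⊤ := by
    apply Submodule.eq_top_of_finrank_eq
    rw [hfr, finrank_euclideanSpace, Fintype.card_fin]
  set b : Module.Basis {u : Vtx P // u ∈ nb} ℝ (EuclideanSpace ℝ (Fin d)) :=
    Module.Basis.mk hli (by rw [hspantop]) with hbdef
  have hbe : ∀ i, b i = e i := fun i => by rw [hbdef, Module.Basis.coe_mk]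
  have hcoord_sum : ∀ (c : {u : Vtx P // u ∈ nb} → ℝ) (i),
      b.coord i (∑ j, c j • e j) = c i := by
    intro c i
    have : (∑ j, c j • e j) = ∑ j, c j • b j := by
      apply Finset.sum_congr rfl
      intro j _
      rw [hbe]
    rw [this, Module.Basis.coord_apply, b.repr_sum_self]
  have hcoordnn : ∀ x ∈ s, ∀ i, 0 ≤ b.coord i (x - (v : E)) := by
    intro x hx i
    obtain ⟨c, hc, hsum⟩ := hcone x hx
    rw [hsum, hcoord_sum]
    exact hc i
  have hcoord_e : ∀ i j, b.coord i (e j) = if j = i then 1 else 0 := by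
    intro i j
    rw [← hbe, Module.Basis.coord_apply, Module.Basis.repr_self]
    exact Finsupp.single_apply
  have hcoordv : ∀ i, b.coord i ((v:E) - (v:E)) = 0 := by
    intro i
    simp
  have hsne : s.Nonempty := ⟨(v : E), hvs⟩
  -- the candidate faces
  set sT : Finset {u : Vtx P // u ∈ nb} → Finset (EuclideanSpace ℝ (Fin d)) :=
    fun T => s.filter (fun x => ∀ i ∉ T, b.coord i (x - (v : E)) = 0) with hsTdef
  set Φ : Finset {u : Vtx P // u ∈ nb} → Set (EuclideanSpace ℝ (Fin d)) :=
    fun T => convexHull ℝ ((sT T : Finset _) : Set (EuclideanSpace ℝ (Fin d))) with hΦdef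
  have hv_sT : ∀ T, (v : E) ∈ sT T :=
    fun T => Finset.mem_filter.2 ⟨hvs, fun i _ => hcoordv i⟩
  have hvΦ : ∀ T, (v : E) ∈ Φ T := fun T => subset_convexHull ℝ _ (Finset.mem_coe.2 (hv_sT T))
  have hi_sT : ∀ (T) (i : {u : Vtx P // u ∈ nb}), i ∈ T → (((i : Vtx P) : E) ∈ sT T) := by
    intro T i hi
    refine Finset.mem_filter.2 ⟨vtx_mem_gen ((i : Vtx P)).2, fun j hj => ?_⟩
    have : ((i : Vtx P) : E) - (v : E) = e i := rfl
    rw [this, hcoord_e j i]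
    rw [if_neg]
    intro hij
    rw [hij] at hi
    exact hj hi
  have hmemΦ : ∀ (T) (i : {u : Vtx P // u ∈ nb}), (((i : Vtx P) : E) ∈ Φ T ↔ i ∈ T) := by
    intro T i
    constructor
    · intro hmem
      by_contra hiT
      have hconv : Φ T ⊆ {z | b.coord i (z - (v : E)) = 0} := by
        rw [hΦdef]
        apply convexHull_min
        · intro x hx
          exact (Finset.mem_filter.1 (Finset.mem_coe.1 hx)).2 i hiT
        · intro y hy z hz a c ha hc hac
          simp only [mem_setOf_eq] at *
          have hkey : a • y + c • z - (v:E) = a • (y - (v:E)) + c • (z - (v:E)) := by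
            have h2 : (v:E) = a • (v:E) + c • (v:E) := by rw [← add_smul, hac, one_smul]
            nth_rewrite 1 [h2]
            module
          rw [hkey, map_add, map_smul, map_smul, hy, hz]
          simp
      have h1 := hconv hmem
      simp only [mem_setOf_eq] at h1
      have : ((i : Vtx P) : E) - (v : E) = e i := rfl
      rw [this, hcoord_e i i, if_pos rfl] at h1
      exact one_ne_zero h1
    · intro hi
      exact subset_convexHull ℝ _ (Finset.mem_coe.2 (hi_sT T i hi))
  -- each Φ T is a face
  have hface : ∀ T, IsExposed ℝ P (Φ T) := by
    intro T
    intro _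
    set L : EuclideanSpace ℝ (Fin d) →ₗ[ℝ] ℝ := ∑ i ∈ Tᶜ, (b.coord i) with hLdef
    set cn : EuclideanSpace ℝ (Fin d) →L[ℝ] ℝ := -(LinearMap.toContinuousLinearMap L) with hcndef
    have hcnval : ∀ z, cn z = -∑ i ∈ Tᶜ, b.coord i z := by
      intro z
      rw [hcndef]
      simp only [ContinuousLinearMap.neg_apply, LinearMap.coe_toContinuousLinearMap', hLdef]
      rw [LinearMap.sum_apply]
    have hdiff : ∀ x, cn x - cn (v : E) = -∑ i ∈ Tᶜ, b.coord i (x - (v : E)) := by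
      intro x
      rw [hcnval, hcnval]
      have hsplit : ∑ i ∈ Tᶜ, b.coord i (x - (v:E))
          = ∑ i ∈ Tᶜ, ((b.coord i) x - (b.coord i) (v:E)) := by
        apply Finset.sum_congr rfl
        intro i _
        rw [map_sub]
      rw [hsplit, Finset.sum_sub_distrib]
      ring
    have hmax : ∀ x ∈ s, cn x ≤ cn (v : E) := by
      intro x hx
      have h1 := hdiff x
      have h2 : 0 ≤ ∑ i ∈ Tᶜ, b.coord i (x - (v : E)) :=
        Finset.sum_nonneg (fun i _ => hcoordnn x hx i)
      linarith [h1, h2]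
    refine ⟨cn, ?_⟩
    have harg := argmax_convexHull s cn hsne
    have hfilt : s.filter (fun x => ∀ y ∈ s, cn y ≤ cn x) = sT T := by
      ext x
      rw [hsTdef]
      simp only [Finset.mem_filter]
      constructor
      · rintro ⟨hxs, hxmax⟩
        refine ⟨hxs, ?_⟩
        have h1 : cn x = cn (v : E) := le_antisymm (hmax x hxs) (hxmax _ hvs)
        have h2 : ∑ i ∈ Tᶜ, b.coord i (x - (v : E)) = 0 := by
          have h2' := hdiff x
          rw [h1, sub_self] at h2'
          linarith [h2']
        have h3 := (Finset.sum_eq_zero_iff_of_nonneg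
          (fun i _ => hcoordnn x hxs i)).1 h2
        intro i hi
        exact h3 i (Finset.mem_compl.2 hi)
      · rintro ⟨hxs, hxzero⟩
        refine ⟨hxs, fun y hy => ?_⟩
        have h2 : ∑ i ∈ Tᶜ, b.coord i (x - (v : E)) = 0 :=
          Finset.sum_eq_zero (fun i hi => hxzero i (Finset.mem_compl.1 hi))
        have h3 : cn x = cn (v : E) := by
          have h3' := hdiff x
          rw [h2, neg_zero] at h3'
          linarith [h3']
        rw [h3]
        exact hmax y hy
    rw [hPdef, harg, hfilt]
  -- dimension of Φ T
  have hdimΦ : ∀ T, setDim (Φ T) = T.card := by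
    intro T
    set w : {i : {u : Vtx P // u ∈ nb} // i ∈ T} → EuclideanSpace ℝ (Fin d) :=
      fun j => e (j : {u : Vtx P // u ∈ nb}) with hwdef
    have hliw : LinearIndependent ℝ w :=
      hli.comp _ Subtype.val_injective
    have hspan : vectorSpan ℝ (Φ T) = Submodule.span ℝ (Set.range w) := by
      have h1 : vectorSpan ℝ (Φ T) = vectorSpan ℝ ((sT T : Finset _) : Set E) := by
        rw [hΦdef, ← direction_affineSpan, affineSpan_convexHull, direction_affineSpan]
      rw [h1, vectorSpan_eq_span_vsub_set_right ℝ (Finset.mem_coe.2 (hv_sT T))]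
      apply le_antisymm
      · rw [Submodule.span_le]
        rintro y ⟨x, hxsT, rfl⟩
        have hxsT' := Finset.mem_filter.1 (Finset.mem_coe.1 hxsT)
        show x -ᵥ (v : E) ∈ _
        rw [vsub_eq_sub]
        have hexp : x - (v : E) = ∑ i, b.repr (x - (v : E)) i • b i := (b.sum_repr _).symm
        rw [hexp]
        apply Submodule.sum_mem
        intro i _
        by_cases hiT : i ∈ T
        · apply Submodule.smul_mem
          apply Submodule.subset_span
          exact ⟨⟨i, hiT⟩, (hbe i).symm⟩
        · have : b.repr (x - (v : E)) i = 0 := by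
            have := hxsT'.2 i hiT
            rw [← Module.Basis.coord_apply]
            exact this
          rw [this, zero_smul]
          exact Submodule.zero_mem _
      · rw [Submodule.span_le]
        rintro y ⟨j, rfl⟩
        apply Submodule.subset_span
        refine ⟨(((j : {u : Vtx P // u ∈ nb}) : Vtx P) : E), ?_, ?_⟩
        · exact Finset.mem_coe.2 (hi_sT T _ j.2)
        · rfl
    show Module.finrank ℝ (vectorSpan ℝ (Φ T)) = T.card
    rw [hspan, finrank_span_eq_card hliw]
    rw [Fintype.card_coe]
  -- classification of faces through v
  have hclass : ∀ F, IsExposed ℝ P F → ((v : E) ∈ F) → ∃ T, F = Φ T := by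
    intro F hF hvF
    obtain ⟨l, hl⟩ := hF ⟨_, hvF⟩
    have hvF' := hvF
    rw [hl] at hvF'
    obtain ⟨hvP, hlmax⟩ := hvF'
    have hmemF : ∀ x ∈ s, (x ∈ F ↔ l x = l (v : E)) := by
      intro x hx
      constructor
      · intro hxF
        rw [hl] at hxF
        exact le_antisymm (hlmax x hxF.1) (hxF.2 _ hvP)
      · intro hlx
        rw [hl]
        refine ⟨subset_convexHull ℝ _ (Finset.mem_coe.2 hx), fun y hy => ?_⟩
        rw [hlx]
        exact hlmax y hy
    have hle : ∀ i, l (e i) ≤ 0 := by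
      intro i
      have h1 : (((i : Vtx P) : E)) ∈ P :=
        subset_convexHull ℝ _ (Finset.mem_coe.2 (vtx_mem_gen ((i : Vtx P)).2))
      have := hlmax _ h1
      have he : l (e i) = l (((i : Vtx P) : E)) - l (v : E) := by
        rw [hedef]
        simp only [map_sub]
      rw [he]
      linarith
    set T := Finset.univ.filter (fun i : {u : Vtx P // u ∈ nb} => (((i : Vtx P) : E) ∈ F))
      with hTdef
    have hiT : ∀ i, i ∈ T ↔ l (e i) = 0 := by
      intro i
      rw [hTdef]
      simp only [Finset.mem_filter, Finset.mem_univ, true_and]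
      rw [hmemF _ (vtx_mem_gen ((i : Vtx P)).2)]
      have he : l (e i) = l (((i : Vtx P) : E)) - l (v : E) := by
        rw [hedef]; simp only [map_sub]
      constructor
      · intro h; rw [he, h]; ring
      · intro h; rw [he] at h; linarith
    refine ⟨T, ?_⟩
    have hfilteq : s.filter (fun x => x ∈ F) = sT T := by
      ext x
      simp only [Finset.mem_filter, hsTdef]
      constructor
      · rintro ⟨hxs, hxF⟩
        refine ⟨hxs, ?_⟩
        have hlx : l (x - (v : E)) = 0 := by
          rw [map_sub]
          have := (hmemF x hxs).1 hxF
          linarith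
        have hexp : x - (v : E) = ∑ i, b.coord i (x - (v : E)) • e i := by
          conv_lhs => rw [← b.sum_repr (x - (v : E))]
          apply Finset.sum_congr rfl
          intro i _
          rw [Module.Basis.coord_apply, hbe]
        rw [hexp] at hlx
        rw [map_sum] at hlx
        have hterm : ∀ i ∈ Finset.univ, l (b.coord i (x - (v:E)) • e i) ≤ 0 := by
          intro i _
          rw [map_smul]
          exact smul_nonpos_of_nonneg_of_nonpos (hcoordnn x hxs i) (hle i)
        have hzero := (Finset.sum_eq_zero_iff_of_nonpos hterm).1 hlx
        intro i hiTn
        have h3 := hzero i (Finset.mem_univ i)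
        rw [map_smul, smul_eq_mul] at h3
        rcases mul_eq_zero.1 h3 with h | h
        · exact h
        · exfalso
          exact hiTn ((hiT i).2 h)
      · rintro ⟨hxs, hxzero⟩
        refine ⟨hxs, ?_⟩
        rw [hmemF x hxs]
        have hexp : x - (v : E) = ∑ i, b.coord i (x - (v : E)) • e i := by
          conv_lhs => rw [← b.sum_repr (x - (v : E))]
          apply Finset.sum_congr rfl
          intro i _
          rw [Module.Basis.coord_apply, hbe]
        have hlx : l (x - (v : E)) = 0 := by
          rw [hexp, map_sum]
          apply Finset.sum_eq_zero
          intro i _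
          rw [map_smul, smul_eq_mul]
          by_cases hiTc : i ∈ T
          · rw [(hiT i).1 hiTc]
            ring
          · rw [hxzero i hiTc]
            ring
        rw [map_sub] at hlx
        linarith
    have hFhull : F = convexHull ℝ ((s.filter fun x => x ∈ F : Finset _) : Set E) := by
      have hF' : IsExposed ℝ (convexHull ℝ (s : Set E)) F := by rw [← hPdef]; exact hF
      exact face_eq_hull_filter hF' ⟨_, hvF⟩
    rw [hFhull, hfilteq]
  exact ⟨nb, hnbset, Φ, fun T => ⟨hface T, hvΦ T, hdimΦ T, hmemΦ T⟩, hclass⟩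

/-- The set of vertex sets of `k`-faces of a simple `d`-polytope is a
`k`-system of its graph. -/
theorem stmt_2 {d : ℕ} (P : Set (EuclideanSpace ℝ (Fin d))) (hP : IsSimplePolytope P)
    (k : ℕ) (hk : 2 ≤ k) (hkd : k ≤ d - 1) :
    IsKSystem (polyGraph P) k (kFaceSets P k) := by
  classical
  obtain ⟨⟨s, hs⟩, hdim, hdeg⟩ := hP
  subst hs
  constructor
  · -- regularity
    rintro S ⟨F, ⟨hFface, hFdim⟩, rfl⟩
    intro v hvS
    obtain ⟨nb, hnbset, Φ, hΦprop, hclass⟩ := vertex_master hdim v (hdeg v)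
    obtain ⟨T, rfl⟩ := hclass F hFface hvS
    obtain ⟨hTface, hTv, hTdim, hTmem⟩ := hΦprop T
    have hTk : T.card = k := by rw [← hTdim]; exact hFdim
    have hseteq : faceVerts (convexHull ℝ (s : Set (EuclideanSpace ℝ (Fin d)))) (Φ T)
          ∩ (polyGraph (convexHull ℝ (s : Set (EuclideanSpace ℝ (Fin d))))).neighborSet v
        = (fun i : {u // u ∈ nb} => (i : Vtx (convexHull ℝ (s : Set (EuclideanSpace ℝ (Fin d)))))) '' {i | i ∈ T} := by
      ext w
      simp only [Set.mem_inter_iff, Set.mem_image, Set.mem_setOf_eq]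
      constructor
      · rintro ⟨hwF, hwN⟩
        have hwnb : w ∈ nb := by rw [← Finset.mem_coe, hnbset]; exact hwN
        exact ⟨⟨w, hwnb⟩, (hTmem ⟨w, hwnb⟩).1 hwF, rfl⟩
      · rintro ⟨i, hiT, rfl⟩
        refine ⟨(hTmem i).2 hiT, ?_⟩
        rw [← hnbset]
        exact Finset.mem_coe.2 i.2
    rw [hseteq, Set.ncard_image_of_injective _ Subtype.val_injective]
    have hsetT : {i : {u // u ∈ nb} | i ∈ T} = (T : Set _) := rfl
    rw [hsetT, Set.ncard_coe_finset]
    exact hTk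
  · -- frames
    intro r N hcard hadj
    obtain ⟨nb, hnbset, Φ, hΦprop, hclass⟩ := vertex_master hdim r (hdeg r)
    have hNnb : ∀ wN ∈ N, wN ∈ nb := by
      intro wN hw
      rw [← Finset.mem_coe, hnbset]
      exact hadj wN hw
    set T : Finset {u // u ∈ nb} := Finset.univ.filter (fun i => (i : Vtx _) ∈ N) with hTdef
    have himage : T.image (fun i : {u // u ∈ nb} => (i : Vtx (convexHull ℝ (s : Set (EuclideanSpace ℝ (Fin d)))))) = N := by
      ext wN
      simp only [Finset.mem_image]
      constructor
      · rintro ⟨i, hi, rfl⟩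
        exact (Finset.mem_filter.1 hi).2
      · intro hw
        exact ⟨⟨wN, hNnb wN hw⟩, Finset.mem_filter.2 ⟨Finset.mem_univ _, hw⟩, rfl⟩
    have hTcard : T.card = k := by
      rw [← hcard, ← himage]
      exact (Finset.card_image_of_injective T Subtype.val_injective).symm
    obtain ⟨hTface, hTv, hTdim, hTmem⟩ := hΦprop T
    refine ⟨faceVerts (convexHull ℝ (s : Set (EuclideanSpace ℝ (Fin d)))) (Φ T),
      ⟨⟨Φ T, ⟨hTface, by rw [hTdim]; exact hTcard⟩, rfl⟩, ?_⟩, ?_⟩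
    · intro w hw
      rcases Set.mem_insert_iff.1 hw with rfl | hwN
      · exact hTv
      · have hwN' := Finset.mem_coe.1 hwN
        exact (hTmem ⟨w, hNnb w hwN'⟩).2
          (Finset.mem_filter.2 ⟨Finset.mem_univ _, hwN'⟩)
    · rintro S' ⟨⟨F', ⟨hF'face, hF'dim⟩, rfl⟩, hsub⟩
      have hrF' : ((r : Vtx (convexHull ℝ (s : Set (EuclideanSpace ℝ (Fin d))))) : EuclideanSpace ℝ (Fin d)) ∈ F' :=
        hsub (Set.mem_insert r _)
      obtain ⟨T', hT'⟩ := hclass F' hF'face hrF'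
      subst hT'
      obtain ⟨hT'face, hT'v, hT'dim, hT'mem⟩ := hΦprop T'
      have hTT' : T ⊆ T' := by
        intro i hi
        have hiN : (i : Vtx (convexHull ℝ (s : Set (EuclideanSpace ℝ (Fin d))))) ∈ N := (Finset.mem_filter.1 hi).2
        have h2 := hsub (Set.mem_insert_of_mem _ (Finset.mem_coe.2 hiN))
        exact (hT'mem i).1 h2
      have hcards : T'.card ≤ T.card := by
        rw [hTcard, ← hF'dim, hT'dim]
      have hTeq : T = T' := Finset.eq_of_subset_of_card_le hTT' hcards
      rw [← hTeq]
end
end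

section
/- Let P be a simple d-polytope and let O be an acyclic orientation of G(P). Then H(O) := Σ_{i=0}^d h_i(O)·2^i is at least the total number of nonempty faces of P, and equality holds if and only if O is an AOF-orientation of G(P). -/
open Set

noncomputable section

namespace Stmt18

open Set
open scoped Classical

variable {d : ℕ}

local notation "Euc" => EuclideanSpace ℝ (Fin d)

set_option maxHeartbeats 1000000

/-- Neighbors of `v` (in the graph of `P`) that lie in `F`. -/
def A {d : ℕ} (P : Set (EuclideanSpace ℝ (Fin d))) (F : Set (EuclideanSpace ℝ (Fin d)))
    (v : Vtx P) : Set (Vtx P) :=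
  {u | (polyGraph P).Adj v u ∧ u ∈ faceVerts P F}





lemma lin_convexOn (l : Euc →L[ℝ] ℝ) : ConvexOn ℝ Set.univ l := by
  refine ⟨convex_univ, fun x _ y _ a b _ _ _ => ?_⟩
  simp only [map_add, map_smul, smul_eq_mul]
  exact le_rfl

lemma exists_ge (l : Euc →L[ℝ] ℝ) {t : Set Euc} {x : Euc} (hx : x ∈ convexHull ℝ t) :
    ∃ y ∈ t, l x ≤ l y :=
  ConvexOn.exists_ge_of_mem_convexHull (lin_convexOn l) (Set.subset_univ _) hx

/-- (K): a nonempty exposed face of `conv ↑s` is the hull of the generators lying in it. -/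
lemma face_eq_hull_inter {s : Finset Euc} {F : Set Euc}
    (hF : IsExposed ℝ (convexHull ℝ (↑s : Set Euc)) F) (hne : F.Nonempty) :
    F = convexHull ℝ ((↑s : Set Euc) ∩ F) := by
  classical
  obtain ⟨l, hl⟩ := hF hne
  set P := convexHull ℝ (↑s : Set Euc) with hP
  apply Set.Subset.antisymm
  · -- F ⊆ conv (s ∩ F)
    intro x hx
    rw [hl] at hx
    obtain ⟨hxP, hxmax⟩ := hx
    rw [hP, Finset.convexHull_eq, Set.mem_setOf_eq] at hxP
    obtain ⟨w, hw0, hw1, hwx⟩ := hxP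
    have hley : ∀ y ∈ s, l y ≤ l x := fun y hy => hxmax y (subset_convexHull ℝ _ hy)
    have hxsum : l x = ∑ y ∈ s, w y * l y := by
      rw [← hwx, Finset.centerMass_eq_of_sum_1 _ _ hw1]
      rw [map_sum]
      simp [smul_eq_mul]
    have heq : ∀ y ∈ s, w y ≠ 0 → l y = l x := by
      intro y hy hwy
      by_contra hne'
      have hlt : l y < l x := lt_of_le_of_ne (hley y hy) hne'
      have h1 : ∑ y ∈ s, w y * l y < ∑ y ∈ s, w y * l x := by
        refine Finset.sum_lt_sum (fun i hi => mul_le_mul_of_nonneg_left (hley i hi) (hw0 i hi))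
          ⟨y, hy, ?_⟩
        have hwpos : 0 < w y := lt_of_le_of_ne (hw0 y hy) (Ne.symm hwy)
        exact mul_lt_mul_of_pos_left hlt hwpos
      rw [← Finset.sum_mul, hw1, one_mul] at h1
      rw [hxsum] at h1
      exact lt_irrefl _ h1
    have hxcm : x = (s.filter (fun y => w y ≠ 0)).centerMass w id := by
      rw [← hwx]
      exact (Finset.centerMass_filter_ne_zero id).symm
    rw [hxcm]
    refine Finset.centerMass_mem_convexHull _ (fun i hi => hw0 i (Finset.mem_filter.1 hi).1)
      ?_ ?_
    · rw [Finset.sum_filter_ne_zero, hw1]; exact one_pos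
    · intro y hy
      obtain ⟨hys, hwy⟩ := Finset.mem_filter.1 hy
      refine ⟨hys, ?_⟩
      rw [hl]
      exact ⟨subset_convexHull ℝ _ hys, fun z hz => (heq y hys hwy) ▸ hxmax z hz⟩
  · -- conv (s ∩ F) ⊆ F
    have hFc : Convex ℝ F := hF.convex (convex_convexHull ℝ _)
    exact convexHull_min Set.inter_subset_right hFc

/-- (V): a generator not in the hull of the others is an exposed point. -/
lemma isExposed_singleton_of_not_mem_erase {s : Finset Euc} {v : Euc} (hv : v ∈ s)
    (hred : v ∉ convexHull ℝ (↑(s.erase v) : Set Euc)) :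
    IsExposed ℝ (convexHull ℝ (↑s : Set Euc)) {v} := by
  classical
  obtain ⟨f, u, hfu, huv⟩ := geometric_hahn_banach_closed_point
    (convex_convexHull ℝ (↑(s.erase v) : Set Euc))
    ((s.erase v).finite_toSet.isClosed_convexHull ℝ) hred
  intro _
  refine ⟨f, Set.Subset.antisymm ?_ ?_⟩
  · intro x hx
    have hx' : x = v := hx
    rw [hx']
    refine ⟨subset_convexHull ℝ _ hv, fun y hy => ?_⟩
    obtain ⟨z, hz, hyz⟩ := exists_ge f hy
    rcases eq_or_ne z v with rfl | hzv
    · exact hyz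
    · have : z ∈ convexHull ℝ (↑(s.erase v) : Set Euc) :=
        subset_convexHull ℝ _ (Finset.mem_erase.2 ⟨hzv, hz⟩)
      exact hyz.trans (le_of_lt ((hfu z this).trans huv))
  · rintro x ⟨hxP, hxmax⟩
    have hfvx : f v ≤ f x := hxmax v (subset_convexHull ℝ _ hv)
    rcases Set.eq_empty_or_nonempty (↑(s.erase v) : Set Euc) with hemp | hne'
    · have : (↑s : Set Euc) = {v} := by
        ext y
        simp only [Set.mem_singleton_iff]
        constructor
        · intro hy
          by_contra hyv
          have : y ∈ (↑(s.erase v) : Set Euc) := Finset.mem_coe.2 (Finset.mem_erase.2 ⟨hyv, hy⟩)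
          rw [hemp] at this; exact this
        · rintro rfl; exact hv
      rw [this, convexHull_singleton] at hxP
      exact hxP
    · have hins : (↑s : Set Euc) = insert v (↑(s.erase v) : Set Euc) := by
        rw [← Finset.coe_insert, Finset.insert_erase hv]
      rw [hins, convexHull_insert hne'] at hxP
      obtain ⟨a, ha, b, hb, hab⟩ := mem_convexJoin.1 hxP
      have ha' : a = v := ha
      rw [ha'] at hab
      obtain ⟨θ, μ, hθ, hμ, hθμ, hsum⟩ := hab
      rcases eq_or_lt_of_le hμ with hμ0 | hμpos
      · rw [← hμ0, zero_smul, add_zero] at hsum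
        have : θ = 1 := by linarith
        rw [this, one_smul] at hsum
        exact Set.mem_singleton_iff.2 hsum.symm
      · exfalso
        have hfb : f b < f v := (hfu b hb).trans huv
        have hfx : f x = θ * f v + μ * f b := by
          rw [← hsum]
          simp only [map_add, map_smul, smul_eq_mul]
        have h2 : μ * f b < μ * f v := mul_lt_mul_of_pos_left hfb hμpos
        have hθeq : θ = 1 - μ := by linarith
        rw [hθeq] at hfx
        have : f x < f v := by nlinarith
        linarith
    
/-- Extreme points of a polytope are exposed points. -/
lemma isExposed_singleton_of_extreme {s : Finset Euc} {x : Euc}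
    (hx : x ∈ Set.extremePoints ℝ (convexHull ℝ (↑s : Set Euc))) :
    IsExposed ℝ (convexHull ℝ (↑s : Set Euc)) {x} := by
  classical
  have hxs : x ∈ (↑s : Set Euc) := extremePoints_convexHull_subset hx
  refine isExposed_singleton_of_not_mem_erase hxs ?_
  intro hmem
  have hsub : convexHull ℝ (↑(s.erase x) : Set Euc) ⊆ convexHull ℝ (↑s : Set Euc) :=
    convexHull_mono (by intro y hy; exact Finset.mem_coe.2 (Finset.mem_of_mem_erase hy))
  have : x ∈ Set.extremePoints ℝ (convexHull ℝ (↑(s.erase x) : Set Euc)) :=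
    inter_extremePoints_subset_extremePoints_of_subset hsub ⟨hmem, hx⟩
  have : x ∈ (↑(s.erase x) : Set Euc) := extremePoints_convexHull_subset this
  simp at this

/-- (W): a polytope is the hull of its extreme points. -/
lemma hull_extremePoints {s : Finset Euc} :
    convexHull ℝ (↑s : Set Euc)
      = convexHull ℝ (Set.extremePoints ℝ (convexHull ℝ (↑s : Set Euc))) := by
  have hext : Set.extremePoints ℝ (convexHull ℝ (↑s : Set Euc)) ⊆ ↑s :=
    extremePoints_convexHull_subset
  have hfin : (Set.extremePoints ℝ (convexHull ℝ (↑s : Set Euc))).Finite :=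
    s.finite_toSet.subset hext
  have := closure_convexHull_extremePoints (s.finite_toSet.isCompact_convexHull ℝ)
    (convex_convexHull ℝ _)
  nth_rewrite 1 [← this]
  exact IsClosed.closure_eq (hfin.isClosed_convexHull ℝ)

/-- Monotonicity: an exposed subset of `A` contained in `F ⊆ A` is exposed in `F`. -/
lemma isExposed_mono {A F B : Set Euc} (hB : IsExposed ℝ A B) (hBF : B ⊆ F) (hFA : F ⊆ A) :
    IsExposed ℝ F B := by
  intro hne
  obtain ⟨l, hl⟩ := hB hne
  refine ⟨l, Set.Subset.antisymm ?_ ?_⟩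
  · intro x hx
    have hx' := hx; rw [hl] at hx'
    exact ⟨hBF hx, fun y hy => hx'.2 y (hFA hy)⟩
  · obtain ⟨b, hb⟩ := hne
    rintro x ⟨hxF, hxmax⟩
    have hb' := hb; rw [hl] at hb'
    rw [hl]
    exact ⟨hFA hxF, fun y hy => (hb'.2 y hy).trans (hxmax b (hBF hb))⟩




/-- (T): for polytopes, an exposed face of an exposed face is an exposed face. -/
lemma isExposed_trans_polytope {s : Finset Euc} {F G : Set Euc}
    (hF : IsExposed ℝ (convexHull ℝ (↑s : Set Euc)) F) (hG : IsExposed ℝ F G) :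
    IsExposed ℝ (convexHull ℝ (↑s : Set Euc)) G := by
  classical
  intro hne
  have hGF : G ⊆ F := hG.subset
  have hFne : F.Nonempty := hne.mono hGF
  obtain ⟨l, hl⟩ := hF hFne
  set P := convexHull ℝ (↑s : Set Euc) with hPdef
  by_cases hsF : (↑s : Set Euc) ⊆ F
  · -- then F = P and G is exposed in P directly
    have hFP : F = P := by
      refine Set.Subset.antisymm (hF.subset) ?_
      exact convexHull_min hsF (hF.convex (convex_convexHull ℝ _))
    obtain ⟨g, hg⟩ := hG hne
    exact ⟨g, by rw [hg, hFP]⟩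
  · obtain ⟨g, hg⟩ := hG hne
    set t : Finset Euc := s.filter (· ∈ F) with htdef
    have hts : (↑t : Set Euc) = ↑s ∩ F := by ext y; simp [htdef]
    have hFt : F = convexHull ℝ (↑t : Set Euc) := by
      rw [hts]; exact face_eq_hull_inter hF hFne
    set tG : Finset Euc := t.filter (· ∈ G) with htGdef
    have htGt : (↑tG : Set Euc) = ↑t ∩ G := by ext y; simp [htGdef]
    have hGt : G = convexHull ℝ (↑tG : Set Euc) := by
      rw [htGt]; exact face_eq_hull_inter (by rw [← hFt]; exact hG) hne
    have htGne : tG.Nonempty := by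
      rw [← Finset.coe_nonempty]
      by_contra hx
      rw [Set.not_nonempty_iff_eq_empty] at hx
      rw [hx, convexHull_empty] at hGt
      exact hne.ne_empty hGt
    obtain ⟨z₀, hz₀⟩ := htGne
    have hz₀t : z₀ ∈ t := (Finset.mem_filter.1 hz₀).1
    have hz₀s : z₀ ∈ s := (Finset.mem_filter.1 hz₀t).1
    have hz₀G : z₀ ∈ G := (Finset.mem_filter.1 hz₀).2
    have hz₀F : z₀ ∈ F := (Finset.mem_filter.1 hz₀t).2
    -- the maximum value of l
    set M : ℝ := l z₀ with hMdef
    have hMmax : ∀ z ∈ P, l z ≤ M := by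
      intro z hz
      have := hl ▸ hz₀F
      exact this.2 z hz
    have hMF : ∀ y ∈ F, l y = M := by
      intro y hy
      have h1 := (hl ▸ hy).2 z₀ (hl ▸ hz₀F).1
      exact le_antisymm (hMmax y (hl ▸ hy).1) h1
    have hsP : ∀ y ∈ s, y ∈ P := fun y hy => subset_convexHull ℝ _ hy
    have hlt : ∀ y ∈ s, y ∉ F → l y < M := by
      intro y hys hyF
      refine lt_of_le_of_ne (hMmax y (hsP y hys)) fun hEq => hyF ?_
      rw [hl]
      exact ⟨hsP y hys, fun z hz => hEq ▸ hMmax z hz⟩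
    -- the maximum value of g on F
    set N : ℝ := g z₀ with hNdef
    have hNmax : ∀ z ∈ F, g z ≤ N := fun z hz => (hg ▸ hz₀G).2 z hz
    have hNF : ∀ y ∈ G, g y = N := by
      intro y hy
      exact le_antisymm (hNmax y (hg ▸ hy).1) ((hg ▸ hy).2 z₀ hz₀F)
    have hgG : ∀ y ∈ F, g y = N → y ∈ G := by
      intro y hyF hEq
      rw [hg]
      exact ⟨hyF, fun z hz => hEq ▸ hNmax z hz⟩
    -- constants
    have hsne' : (s.filter (· ∉ F)).Nonempty := by
      rw [Finset.filter_nonempty_iff]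
      obtain ⟨y, hy1, hy2⟩ := Set.not_subset.1 hsF
      exact ⟨y, Finset.mem_coe.1 hy1, hy2⟩
    set δ : ℝ := ((s.filter (· ∉ F)).image (fun y => M - l y)).min' (hsne'.image _) with hδdef
    have hδpos : 0 < δ := by
      rw [hδdef]
      apply lt_of_lt_of_le _ (le_refl _)
      rw [Finset.lt_min'_iff]
      intro b hb
      obtain ⟨y, hy, rfl⟩ := Finset.mem_image.1 hb
      obtain ⟨hys, hyF⟩ := Finset.mem_filter.1 hy
      have := hlt y hys hyF
      linarith
    have hδle : ∀ y ∈ s, y ∉ F → l y ≤ M - δ := by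
      intro y hys hyF
      have : δ ≤ M - l y := Finset.min'_le _ _
        (Finset.mem_image.2 ⟨y, Finset.mem_filter.2 ⟨hys, hyF⟩, rfl⟩)
      linarith
    have hsne : s.Nonempty := ⟨z₀, hz₀s⟩
    set C : ℝ := (s.image (fun y => |g y|)).max' (hsne.image _) + 1 with hCdef
    have hgC : ∀ y ∈ s, |g y| ≤ C - 1 := by
      intro y hy
      rw [hCdef]
      have : |g y| ≤ (s.image (fun z => |g z|)).max' (hsne.image _) :=
        Finset.le_max' (s.image (fun z => |g z|)) (|g y|)
          (Finset.mem_image_of_mem (fun z => |g z|) hy)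
      linarith
    have hCpos : 0 < C := by
      have := hgC z₀ hz₀s
      have h0 := abs_nonneg (g z₀)
      rw [hCdef] at this ⊢
      linarith
    set ε : ℝ := δ / (2 * C) with hεdef
    have hεpos : 0 < ε := div_pos hδpos (by linarith)
    have hεC : ε * (2 * C) = δ := div_mul_cancel₀ _ (by positivity)
    set h : Euc →L[ℝ] ℝ := l + ε • g with hhdef
    have hval : ∀ y : Euc, h y = l y + ε * g y := by
      intro y; rw [hhdef]; simp [smul_eq_mul]
    -- generator analysis
    have ha : ∀ y ∈ tG, h y = M + ε * N := by
      intro y hy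
      have hyt := (Finset.mem_filter.1 hy).1
      have hyF := (Finset.mem_filter.1 hyt).2
      have hyG := (Finset.mem_filter.1 hy).2
      rw [hval, hMF y hyF, hNF y hyG]
    have hb : ∀ y ∈ s, y ∉ tG → h y < M + ε * N := by
      intro y hys hytG
      by_cases hyF : y ∈ F
      · have hyt : y ∈ t := Finset.mem_filter.2 ⟨hys, hyF⟩
        have hyG : y ∉ G := fun hyG => hytG (Finset.mem_filter.2 ⟨hyt, hyG⟩)
        have hgy : g y < N := by
          refine lt_of_le_of_ne (hNmax y hyF) fun hEq => hyG (hgG y hyF hEq)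
        rw [hval, hMF y hyF]
        nlinarith
      · have h1 : l y ≤ M - δ := hδle y hys hyF
        have h2 : ε * g y ≤ ε * (C - 1) := by
          refine mul_le_mul_of_nonneg_left ?_ (le_of_lt hεpos)
          exact (abs_le.1 (hgC y hys)).2
        have h3 : -(C - 1) ≤ N := by
          have := (abs_le.1 (hgC z₀ hz₀s)).1
          rw [hNdef]; linarith
        have h4 : ε * (-(C-1)) ≤ ε * N := mul_le_mul_of_nonneg_left h3 (le_of_lt hεpos)
        rw [hval]
        nlinarith
    have hmaxP : ∀ x ∈ P, h x ≤ M + ε * N := by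
      intro x hx
      obtain ⟨y, hy, hxy⟩ := exists_ge h hx
      refine hxy.trans ?_
      by_cases hyG : y ∈ tG
      · exact le_of_eq (ha y hyG)
      · exact le_of_lt (hb y hy hyG)
    have hz₀max : h z₀ = M + ε * N := ha z₀ hz₀
    -- the exposed set of h
    have hEh : G = {x ∈ P | ∀ y ∈ P, h y ≤ h x} := by
      have hEhexp : IsExposed ℝ P {x ∈ P | ∀ y ∈ P, h y ≤ h x} := fun _ => ⟨h, rfl⟩
      have hEhne : ({x ∈ P | ∀ y ∈ P, h y ≤ h x}).Nonempty := by
        refine ⟨z₀, hsP z₀ hz₀s, fun y hy => ?_⟩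
        rw [hz₀max]; exact hmaxP y hy
      have hKEh := face_eq_hull_inter hEhexp hEhne
      have hinter : (↑s : Set Euc) ∩ {x ∈ P | ∀ y ∈ P, h y ≤ h x} = ↑tG := by
        ext y
        constructor
        · rintro ⟨hys, hyP, hymax⟩
          by_contra hytG
          have hlt' := hb y hys hytG
          have : M + ε * N ≤ h y := by
            have := hymax z₀ (hsP z₀ hz₀s)
            rw [hz₀max] at this; exact this
          linarith
        · intro hytG
          have hys : y ∈ s := (Finset.mem_filter.1 ((Finset.mem_filter.1 hytG).1)).1
          refine ⟨hys, hsP y hys, fun z hz => ?_⟩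
          rw [ha y hytG]; exact hmaxP z hz
      rw [hKEh, hinter, ← hGt]
    exact ⟨h, hEh⟩

/-- Nonempty faces of polytopes are polytopes. -/
lemma face_isPolytope {P F : Set Euc} (hP : IsPolytope P) (hF : IsFace P F) : IsPolytope F := by
  classical
  obtain ⟨s, rfl⟩ := hP
  rcases F.eq_empty_or_nonempty with rfl | hne
  · exact ⟨∅, by simp⟩
  · refine ⟨s.filter (· ∈ F), ?_⟩
    have : (↑(s.filter (· ∈ F)) : Set Euc) = ↑s ∩ F := by ext y; simp
    rw [this]
    exact face_eq_hull_inter hF hne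

lemma isFace_trans {P F G : Set Euc} (hP : IsPolytope P) (hF : IsFace P F) (hG : IsFace F G) :
    IsFace P G := by
  obtain ⟨s, rfl⟩ := hP
  exact isExposed_trans_polytope hF hG

/-- GEOMETRY: a polytope has finitely many faces. -/
lemma geom_finite' {P : Set Euc} (hP : IsPolytope P) :
    {F : Set Euc | IsFace P F ∧ F.Nonempty}.Finite := by
  obtain ⟨s, rfl⟩ := hP
  have hsub : {F : Set Euc | IsFace (convexHull ℝ (↑s : Set Euc)) F ∧ F.Nonempty}
      ⊆ (fun A : Set Euc => convexHull ℝ A) '' {A : Set Euc | A ⊆ ↑s} := by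
    rintro F ⟨hF, hne⟩
    exact ⟨↑s ∩ F, Set.inter_subset_left, (face_eq_hull_inter hF hne).symm⟩
  exact ((s.finite_toSet.finite_subsets).image _).subset hsub

/-- GEOMETRY: every nonempty face contains a vertex. -/
lemma geom_vertex' {P : Set Euc} (hP : IsPolytope P)
    {F : Set Euc} (hF : IsFace P F) (hne : F.Nonempty) :
    (faceVerts P F).Nonempty := by
  obtain ⟨s, rfl⟩ := hP
  have hKF := face_eq_hull_inter hF hne
  have hcomp : IsCompact F := by
    rw [hKF]
    exact (s.finite_toSet.inter_of_left F).isCompact_convexHull ℝ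
  obtain ⟨p, hp⟩ := hcomp.extremePoints_nonempty hne
  have hpP : p ∈ Set.extremePoints ℝ (convexHull ℝ (↑s : Set Euc)) :=
    hF.isExtreme.extremePoints_subset_extremePoints hp
  have hface : IsFace (convexHull ℝ (↑s : Set Euc)) {p} := isExposed_singleton_of_extreme hpP
  exact ⟨⟨p, hface⟩, hp.1⟩





/-- (LP): if `l` does not increase along any edge at the vertex `v`, then `v`
maximizes `l` over the whole polytope. -/
lemma local_global {s : Finset Euc} {v : Euc}
    (hv : IsExposed ℝ (convexHull ℝ (↑s : Set Euc)) {v}) (l : Euc →L[ℝ] ℝ)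
    (hnbr : ∀ w : Euc, IsExposed ℝ (convexHull ℝ (↑s : Set Euc)) {w} →
      IsExposed ℝ (convexHull ℝ (↑s : Set Euc)) (segment ℝ v w) → w ≠ v → l w ≤ l v) :
    ∀ x ∈ convexHull ℝ (↑s : Set Euc), l x ≤ l v := by
  classical
  set P := convexHull ℝ (↑s : Set Euc) with hPdef
  -- replace generators by the extreme points
  have hfin : (Set.extremePoints ℝ P).Finite :=
    s.finite_toSet.subset extremePoints_convexHull_subset
  set s' : Finset Euc := hfin.toFinset with hs'def
  have hext : (↑s' : Set Euc) = Set.extremePoints ℝ P := hfin.coe_toFinset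
  have hPs' : P = convexHull ℝ (↑s' : Set Euc) := by
    rw [hext, hPdef]; exact hull_extremePoints
  have hgenexp : ∀ y ∈ s', IsExposed ℝ P {y} := by
    intro y hy
    have hy' : y ∈ Set.extremePoints ℝ P := by rw [← hext]; exact hy
    rw [hPs'] at hy' ⊢
    exact isExposed_singleton_of_extreme hy'
  -- basic facts about v and l₀
  obtain ⟨l₀, hl₀⟩ := hv ⟨v, rfl⟩
  have hvmem : v ∈ {x ∈ P | ∀ y ∈ P, l₀ y ≤ l₀ x} := hl₀ ▸ rfl
  have hvP : v ∈ P := hvmem.1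
  have hmax₀ : ∀ y ∈ P, l₀ y ≤ l₀ v := hvmem.2
  have hstrict₀ : ∀ x ∈ P, x ≠ v → l₀ x < l₀ v := by
    intro x hx hxv
    refine lt_of_le_of_ne (hmax₀ x hx) fun hEq => hxv ?_
    have : x ∈ ({v} : Set Euc) := by
      rw [hl₀]; exact ⟨hx, fun y hy => hEq ▸ hmax₀ y hy⟩
    exact this
  have hvs' : v ∈ s' := by
    have : v ∈ Set.extremePoints ℝ P := (hv.isExtreme).mem_extremePoints
    rw [← hext] at this; exact this
  intro x hxP
  by_cases hxv : x = v
  · rw [hxv]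
  -- now x ≠ v, so the polytope is nontrivial
  set t' : Finset Euc := s'.erase v with ht'def
  have ht'P : ∀ y ∈ t', y ∈ P := fun y hy => by
    rw [hPs']; exact subset_convexHull ℝ _ (Finset.mem_coe.2 (Finset.mem_of_mem_erase hy))
  have ht'v : ∀ y ∈ t', y ≠ v := fun y hy => (Finset.mem_erase.1 hy).1
  have ht'ne : t'.Nonempty := by
    by_contra hemp
    rw [Finset.not_nonempty_iff_eq_empty] at hemp
    have hsub : (↑s' : Set Euc) ⊆ {v} := by
      intro y hy
      by_contra hyv
      have : y ∈ t' := Finset.mem_erase.2 ⟨hyv, hy⟩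
      rw [hemp] at this; exact absurd this (Finset.notMem_empty y)
    have : P ⊆ {v} := by
      rw [hPs']
      exact convexHull_min hsub (convex_singleton v)
    exact hxv (this hxP)
  -- the gap δ
  set δ : ℝ := (t'.image (fun y => l₀ v - l₀ y)).min' (ht'ne.image _) with hδdef
  have hδpos : 0 < δ := by
    rw [hδdef, Finset.lt_min'_iff]
    intro b hb
    obtain ⟨y, hy, rfl⟩ := Finset.mem_image.1 hb
    have := hstrict₀ y (ht'P y hy) (ht'v y hy)
    linarith
  have hδle : ∀ y ∈ t', δ ≤ l₀ v - l₀ y := by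
    intro y hy
    exact Finset.min'_le _ _ (Finset.mem_image_of_mem _ hy)
  -- the scaling factors and radial projections
  set c : Euc → ℝ := fun y => δ / (l₀ v - l₀ y) with hcdef
  have hcpos : ∀ y ∈ t', 0 < c y := fun y hy =>
    div_pos hδpos (by have := hδle y hy; linarith)
  have hcle : ∀ y ∈ t', c y ≤ 1 := by
    intro y hy
    have h1 := hδle y hy
    have h2 : (0:ℝ) < l₀ v - l₀ y := by linarith
    rw [hcdef]
    simp only
    rw [div_le_one h2]
    linarith
  have hcmul : ∀ y ∈ t', c y * (l₀ v - l₀ y) = δ := by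
    intro y hy
    have h2 : l₀ v - l₀ y ≠ 0 := by have := hδle y hy; intro h; rw [h] at this; linarith
    rw [hcdef]
    simp only
    exact div_mul_cancel₀ _ h2
  set p : Euc → Euc := fun y => v + c y • (y - v) with hpdef
  have happ : ∀ (f : Euc →L[ℝ] ℝ) (e : ℝ) (y z : Euc),
      f (z + e • (y - z)) = f z + e * (f y - f z) := by
    intro f e y z
    simp only [map_add, map_smul, map_sub, smul_eq_mul]
    try ring
  have hpsub : ∀ y : Euc, p y - v = c y • (y - v) := by
    intro y; rw [hpdef]; simp only; abel
  have hl₀p : ∀ y ∈ t', l₀ (p y) = l₀ v - δ := by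
    intro y hy
    rw [hpdef]
    simp only
    rw [happ]
    have := hcmul y hy
    nlinarith [hcmul y hy]
  have hpP : ∀ y ∈ t', p y ∈ P := by
    intro y hy
    have hconv : Convex ℝ P := by rw [hPdef]; exact convex_convexHull ℝ _
    have hvy : p y = (1 - c y) • v + c y • y := by
      rw [hpdef]; simp only; module
    rw [hvy]
    exact hconv hvP (ht'P y hy)
      (by have := hcle y hy; linarith) (le_of_lt (hcpos y hy)) (by ring)
  -- the vertex figure R
  set R : Set Euc := convexHull ℝ (↑(t'.image p) : Set Euc) with hRdef
  have hRP : R ⊆ P := by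
    rw [hRdef]
    have hconv : Convex ℝ P := by rw [hPdef]; exact convex_convexHull ℝ _
    refine convexHull_min ?_ hconv
    intro z hz
    obtain ⟨y, hy, rfl⟩ := Finset.mem_image.1 (Finset.mem_coe.1 hz)
    exact hpP y hy
  have hl₀R : ∀ z ∈ R, l₀ z = l₀ v - δ := by
    intro z hz
    rw [hRdef] at hz
    have h1 : l₀ z ≤ l₀ v - δ := by
      obtain ⟨q, hq, hzq⟩ := exists_ge l₀ hz
      obtain ⟨y, hy, rfl⟩ := Finset.mem_image.1 (Finset.mem_coe.1 hq)
      rw [hl₀p y hy] at hzq; exact hzq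
    have h2 : -(l₀ z) ≤ -(l₀ v - δ) := by
      obtain ⟨q, hq, hzq⟩ := exists_ge (-l₀) hz
      obtain ⟨y, hy, rfl⟩ := Finset.mem_image.1 (Finset.mem_coe.1 hq)
      simp only [ContinuousLinearMap.neg_apply] at hzq
      rw [hl₀p y hy] at hzq
      linarith
    linarith
  -- Representation: every x ∈ P lies on a ray from v through R
  have hrepr : ∀ x ∈ P, x = v ∨ ∃ β : ℝ, 0 < β ∧ ∃ z ∈ R, x = v + β • (z - v) := by
    intro x hx
    rw [hPs', Finset.convexHull_eq, Set.mem_setOf_eq] at hx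
    obtain ⟨w, hw0, hw1, hwx⟩ := hx
    set b : Euc → ℝ := fun y => w y * (c y)⁻¹ with hbdef
    have hb0 : ∀ y ∈ t', 0 ≤ b y := fun y hy =>
      mul_nonneg (hw0 y (Finset.mem_of_mem_erase hy)) (le_of_lt (inv_pos.2 (hcpos y hy)))
    set β : ℝ := ∑ y ∈ t', b y with hβdef
    have hβ0 : 0 ≤ β := Finset.sum_nonneg hb0
    have hxsum : x = ∑ y ∈ s', w y • y := by
      rw [← hwx, Finset.centerMass_eq_of_sum_1 _ _ hw1]
      rfl
    have h1 : ∑ y ∈ s', w y • (y - v) = x - v := by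
      simp_rw [smul_sub]
      rw [Finset.sum_sub_distrib, ← Finset.sum_smul, hw1, one_smul, ← hxsum]
    have h2 : ∑ y ∈ t', w y • (y - v) = ∑ y ∈ s', w y • (y - v) := by
      rw [← Finset.sum_erase_add s' _ hvs']
      simp [ht'def]
    have h3 : ∀ y ∈ t', b y • (p y - v) = w y • (y - v) := by
      intro y hy
      rw [hpsub, smul_smul, hbdef]
      simp only
      rw [inv_mul_cancel_right₀ (ne_of_gt (hcpos y hy))]
    have hxv' : x - v = ∑ y ∈ t', b y • (p y - v) := by
      rw [Finset.sum_congr rfl h3, h2, h1]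
    rcases eq_or_lt_of_le hβ0 with hβz | hβpos
    · left
      have hballz : ∀ y ∈ t', b y = 0 :=
        (Finset.sum_eq_zero_iff_of_nonneg hb0).1 hβz.symm
      have : x - v = 0 := by
        rw [hxv']
        exact Finset.sum_eq_zero fun y hy => by rw [hballz y hy, zero_smul]
      exact sub_eq_zero.1 this
    · right
      refine ⟨β, hβpos, t'.centerMass b p, ?_, ?_⟩
      · rw [hRdef]
        exact Finset.centerMass_mem_convexHull _ hb0 hβpos
          (fun i hi => Finset.mem_coe.2 (Finset.mem_image_of_mem _ hi))
      · have hcm : β • (t'.centerMass b p - v) = ∑ y ∈ t', b y • (p y - v) := by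
          rw [Finset.centerMass, ← hβdef, smul_sub, smul_inv_smul₀ (ne_of_gt hβpos)]
          simp_rw [smul_sub]
          rw [Finset.sum_sub_distrib, ← Finset.sum_smul, ← hβdef]
        rw [← hxv'] at hcm
        rw [hcm]
        abel
  -- every exposed point of R sees an edge of P at v
  have hRvert : ∀ q ∈ Set.extremePoints ℝ R, l q ≤ l v := by
    intro q hq
    have hqR : q ∈ R := hq.1
    have hqexp : IsExposed ℝ R {q} := by
      rw [hRdef] at hq ⊢; exact isExposed_singleton_of_extreme hq
    have hqpt : q ∈ (↑(t'.image p) : Set Euc) := by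
      rw [hRdef] at hq; exact extremePoints_convexHull_subset hq
    obtain ⟨ystar, hystar, hpystar⟩ := Finset.mem_image.1 (Finset.mem_coe.1 hqpt)
    obtain ⟨g, hg⟩ := hqexp ⟨q, rfl⟩
    have hqself : q ∈ {x ∈ R | ∀ y ∈ R, g y ≤ g x} := hg ▸ rfl
    have hgmax : ∀ z ∈ R, g z ≤ g q := hqself.2
    have hgstrict : ∀ z ∈ R, z ≠ q → g z < g q := by
      intro z hz hzq
      refine lt_of_le_of_ne (hgmax z hz) fun hEq => hzq ?_
      have : z ∈ ({q} : Set Euc) := by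
        rw [hg]; exact ⟨hz, fun y hy => hEq ▸ hgmax y hy⟩
      exact this
    set γ : ℝ := (g q - g v) / δ with hγdef
    set h : Euc →L[ℝ] ℝ := g + γ • l₀ with hhdef
    have hhval : ∀ z : Euc, h z = g z + γ * l₀ z := by
      intro z; rw [hhdef]; simp [smul_eq_mul]
    have hγδ : γ * δ = g q - g v := by
      rw [hγdef]; exact div_mul_cancel₀ _ (ne_of_gt hδpos)
    have hpyval : ∀ y ∈ t', h (p y) - h v = g (p y) - g q := by
      intro y hy
      rw [hhval, hhval, hl₀p y hy]
      linear_combination -hγδ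
    have hyval : ∀ y ∈ t', h y - h v = (c y)⁻¹ * (h (p y) - h v) := by
      intro y hy
      have heq1 : h (p y) = h v + c y * (h y - h v) := by
        rw [hpdef]; simp only; rw [happ]
      have hcne : (c y) ≠ 0 := ne_of_gt (hcpos y hy)
      rw [heq1]
      have heq2 : h v + c y * (h y - h v) - h v = c y * (h y - h v) := by ring
      rw [heq2, inv_mul_cancel_left₀ hcne]
    have hgen_le : ∀ y ∈ t', h y ≤ h v := by
      intro y hy
      have h1 := hpyval y hy
      have h2 := hyval y hy
      have h3 : g (p y) ≤ g q := hgmax (p y) (by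
        rw [hRdef]
        exact subset_convexHull ℝ _ (Finset.mem_coe.2 (Finset.mem_image_of_mem _ hy)))
      have h4 : h (p y) - h v ≤ 0 := by rw [h1]; linarith
      have h5 : (0:ℝ) ≤ (c y)⁻¹ := le_of_lt (inv_pos.2 (hcpos y hy))
      nlinarith
    have hmaxh : ∀ z ∈ P, h z ≤ h v := by
      intro z hz
      rw [hPs'] at hz
      obtain ⟨y, hy, hzy⟩ := exists_ge h hz
      rcases eq_or_ne y v with rfl | hyv
      · exact hzy
      · exact hzy.trans (hgen_le y (Finset.mem_erase.2 ⟨hyv, hy⟩))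
    set E : Set Euc := {z ∈ P | ∀ y ∈ P, h y ≤ h z} with hEdef
    have hEexp : IsExposed ℝ P E := fun _ => ⟨h, rfl⟩
    have hvE : v ∈ E := ⟨hvP, hmaxh⟩
    -- membership in E for relevant generators
    have hmemE : ∀ y ∈ t', p y = q → y ∈ E := by
      intro y hy hpyq
      have h1 := hpyval y hy
      rw [hpyq] at h1
      have h2 := hyval y hy
      have h3 : h y = h v := by
        rw [hpyq] at h2
        have : h q - h q = 0 := by ring
        rw [sub_self] at h1
        rw [h1, mul_zero] at h2
        linarith
      exact ⟨ht'P y hy, fun z hz => h3 ▸ hmaxh z hz⟩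
    have hE_gen : (↑s' : Set Euc) ∩ E = insert v (↑(t'.filter (fun y => p y = q)) : Set Euc) := by
      ext y
      constructor
      · rintro ⟨hys', hyE⟩
        rcases eq_or_ne y v with rfl | hyv
        · exact Set.mem_insert _ _
        · have hyt' : y ∈ t' := Finset.mem_erase.2 ⟨hyv, hys'⟩
          have hhy : h y = h v := le_antisymm (hgen_le y hyt') (hyE.2 v hvP)
          have h2 := hyval y hyt'
          have h3 : h (p y) - h v = 0 := by
            have hc : (c y)⁻¹ ≠ 0 := ne_of_gt (inv_pos.2 (hcpos y hyt'))
            have : (c y)⁻¹ * (h (p y) - h v) = 0 := by rw [← h2, hhy]; ring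
            exact (mul_eq_zero.1 this).resolve_left hc
          have h4 : g (p y) = g q := by
            have := hpyval y hyt'
            rw [h3] at this
            linarith
          have h5 : p y = q := by
            by_contra hne'
            have := hgstrict (p y) (by
              rw [hRdef]
              exact subset_convexHull ℝ _ (Finset.mem_coe.2 (Finset.mem_image_of_mem _ hyt'))) hne'
            linarith
          exact Set.mem_insert_of_mem _ (Finset.mem_coe.2 (Finset.mem_filter.2 ⟨hyt', h5⟩))
      · intro hy
        rcases hy with rfl | hy
        · exact ⟨Finset.mem_coe.2 hvs', hvE⟩
        · obtain ⟨hyt', hpyq⟩ := Finset.mem_filter.1 (Finset.mem_coe.1 hy)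
          exact ⟨Finset.mem_coe.2 (Finset.mem_of_mem_erase hyt'), hmemE y hyt' hpyq⟩
    -- the minimal-l₀ element of the fiber gives the edge
    set Yf : Finset Euc := t'.filter (fun y => p y = q) with hYfdef
    have hYfne : Yf.Nonempty := ⟨ystar, Finset.mem_filter.2 ⟨hystar, hpystar⟩⟩
    obtain ⟨w, hwYf, hwmin⟩ := Finset.exists_min_image Yf l₀ hYfne
    have hwt' : w ∈ t' := (Finset.mem_filter.1 hwYf).1
    have hpwq : p w = q := (Finset.mem_filter.1 hwYf).2
    have hwE : w ∈ E := hmemE w hwt' hpwq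
    -- every generator in the fiber lies on the segment [v, w]
    have hseg_gen : (↑s' : Set Euc) ∩ E ⊆ segment ℝ v w := by
      rw [hE_gen]
      rintro y (rfl | hy)
      · exact left_mem_segment ℝ y w
      · obtain ⟨hyt', hpyq⟩ := Finset.mem_filter.1 (Finset.mem_coe.1 hy)
        -- y = v + θ • (w - v) with θ = c w / c y ∈ (0,1]
        have hyq : y - v = (c y)⁻¹ • (q - v) := by
          rw [← hpyq, hpsub, smul_smul, inv_mul_cancel₀ (ne_of_gt (hcpos y hyt')), one_smul]
        have hwq : w - v = (c w)⁻¹ • (q - v) := by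
          rw [← hpwq, hpsub, smul_smul, inv_mul_cancel₀ (ne_of_gt (hcpos w hwt')), one_smul]
        set θ : ℝ := c w / c y with hθdef
        have hθpos : 0 < θ := div_pos (hcpos w hwt') (hcpos y hyt')
        have hθle : θ ≤ 1 := by
          rw [hθdef, div_le_one (hcpos y hyt')]
          -- c w ≤ c y ⇔ l₀ w ≤ l₀ y
          have hly := hwmin y (Finset.mem_filter.2 ⟨hyt', hpyq⟩)
          rw [hcdef]
          simp only
          have hyd : (0:ℝ) < l₀ v - l₀ y := by have := hδle y hyt'; linarith
          have hwd : (0:ℝ) < l₀ v - l₀ w := by have := hδle w hwt'; linarith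
          rw [div_le_div_iff₀ hwd hyd]
          nlinarith
        have hywv : y - v = θ • (w - v) := by
          rw [hyq, hwq, smul_smul]
          congr 1
          rw [hθdef]
          field_simp
          rw [mul_comm (c y) (c w), div_mul_cancel_left₀ (ne_of_gt (hcpos w hwt')), one_div]
        refine ⟨1 - θ, θ, by linarith, le_of_lt hθpos, by ring, ?_⟩
        have : y = v + θ • (w - v) := by
          rw [← hywv]; abel
        rw [this]
        module
    -- E is exactly the segment [v, w]
    have hEK : E = convexHull ℝ ((↑s' : Set Euc) ∩ E) := by
      exact face_eq_hull_inter (s := s') (by rw [← hPs']; exact hEexp) ⟨v, hvE⟩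
    have hEseg : E = segment ℝ v w := by
      refine Set.Subset.antisymm ?_ ?_
      · rw [hEK]
        exact convexHull_min hseg_gen (convex_segment v w)
      · rw [← convexHull_pair]
        refine convexHull_min ?_ (hEexp.convex (by rw [hPdef]; exact convex_convexHull ℝ _))
        rintro z (rfl | rfl)
        · exact hvE
        · exact hwE
    have hedge : IsExposed ℝ P (segment ℝ v w) := hEseg ▸ hEexp
    have hwvert : IsExposed ℝ P {w} := hgenexp w (Finset.mem_of_mem_erase hwt')
    have hlw : l w ≤ l v := hnbr w hwvert hedge (ht'v w hwt')
    -- conclude for q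
    have : l q = l v + c w * (l w - l v) := by
      rw [← hpwq, hpdef]; simp only; rw [happ]
    rw [this]
    nlinarith [hcpos w hwt']
  -- l is bounded by l v on R
  have hRle : ∀ z ∈ R, l z ≤ l v := by
    intro z hz
    have hR2 : R = convexHull ℝ (Set.extremePoints ℝ R) := by
      rw [hRdef]; exact hull_extremePoints
    rw [hR2] at hz
    obtain ⟨q, hq, hzq⟩ := exists_ge l hz
    exact hzq.trans (hRvert q hq)
  -- conclude
  rcases hrepr x hxP with rfl | ⟨β, hβpos, z, hzR, hxeq⟩
  · exact le_refl _
  · have : l x = l v + β * (l z - l v) := by rw [hxeq, happ]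
    rw [this]
    nlinarith [hRle z hzR]




lemma vtx_finite {P : Set Euc} (hpoly : IsPolytope P) : Finite (Vtx P) := by
  classical
  obtain ⟨s, rfl⟩ := hpoly
  refine Finite.of_injective (fun v : Vtx (convexHull ℝ (↑s : Set Euc)) =>
    (⟨(v : Euc), ?_⟩ : {y : Euc // y ∈ s})) ?_
  · have hex : (v : Euc) ∈ Set.extremePoints ℝ (convexHull ℝ (↑s : Set Euc)) :=
      (v.2.isExtreme).mem_extremePoints
    exact Finset.mem_coe.1 (extremePoints_convexHull_subset hex)
  · intro u w huw
    simp only [Subtype.mk.injEq] at huw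
    exact Subtype.ext huw

/-- If a functional agrees with its value at `v` on all neighbors of the vertex `v`,
then it is constant on `P`. -/
lemma const_of_const_on_nbrs {P : Set Euc} {s : Finset Euc}
    (hs : P = convexHull ℝ (↑s : Set Euc)) (v : Vtx P) (l : Euc →L[ℝ] ℝ)
    (hn : ∀ u : Vtx P, (polyGraph P).Adj v u → l ↑u = l ↑v) :
    ∀ x ∈ P, l x = l ↑v := by
  have hnbr : ∀ (lf : Euc →L[ℝ] ℝ), (∀ u : Vtx P, (polyGraph P).Adj v u → lf ↑u ≤ lf ↑v) →
      ∀ w : Euc, IsExposed ℝ (convexHull ℝ (↑s : Set Euc)) {w} →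
      IsExposed ℝ (convexHull ℝ (↑s : Set Euc)) (segment ℝ (↑v) w) → w ≠ ↑v → lf w ≤ lf ↑v := by
    intro lf hlf w hw hseg hwv
    rw [← hs] at hw hseg
    have hwP : IsFace P {w} := hw
    have hsegP : IsFace P (segment ℝ (↑v) w) := hseg
    have hadj : (polyGraph P).Adj v ⟨w, hwP⟩ :=
      ⟨fun hEq => hwv (congrArg Subtype.val hEq).symm, hsegP⟩
    exact hlf ⟨w, hwP⟩ hadj
  have hvexp : IsExposed ℝ (convexHull ℝ (↑s : Set Euc)) {(v : Euc)} := by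
    rw [← hs]; exact v.2
  intro x hx
  have h1 : l x ≤ l ↑v := by
    refine local_global hvexp l (hnbr l fun u hu => le_of_eq (hn u hu)) x ?_
    rw [← hs]; exact hx
  have h2 : (-l) x ≤ (-l) ↑v := by
    refine local_global hvexp (-l) (hnbr (-l) fun u hu => ?_) x (by rw [← hs]; exact hx)
    simp only [ContinuousLinearMap.neg_apply]
    exact le_of_eq (congrArg Neg.neg (hn u hu))
  simp only [ContinuousLinearMap.neg_apply] at h2
  linarith

/-- Main construction: for a simple polytope, a vertex `v` and a set `S` of neighbors of `v`,
there is a unique face containing `v` whose set of neighbors of `v` is exactly `S`. -/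
lemma face_determined {P : Set Euc} (hP : IsSimplePolytope P) (v : Vtx P)
    (S : Set (Vtx P)) (hS : S ⊆ (polyGraph P).neighborSet v) :
    ∃ G₀ : Set Euc, IsFace P G₀ ∧ v ∈ faceVerts P G₀ ∧ A P G₀ v = S ∧
      ∀ F : Set Euc, IsFace P F → v ∈ faceVerts P F → A P F v = S → F = G₀ := by
  classical
  obtain ⟨hpoly, hdim, hdeg⟩ := hP
  haveI : Finite (Vtx P) := vtx_finite hpoly
  obtain ⟨s, hs⟩ := hpoly
  have hvP : (v : Euc) ∈ P := v.2.subset rfl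
  -- the neighbors of v, as a finset
  set NB : Set (Vtx P) := (polyGraph P).neighborSet v with hNBdef
  have hNBfin : NB.Finite := Set.toFinite _
  set nf : Finset (Vtx P) := hNBfin.toFinset with hnfdef
  have hnfmem : ∀ u : Vtx P, u ∈ nf ↔ (polyGraph P).Adj v u := by
    intro u; rw [hnfdef, Set.Finite.mem_toFinset]; rfl
  have hcard : nf.card = d := by
    have := hdeg v
    rw [← Set.ncard_coe_finset, hnfdef, Set.Finite.coe_toFinset]
    exact this
  -- edge directions
  set e : Vtx P → Euc := fun u => (u : Euc) - (v : Euc) with hedef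
  set W : Submodule ℝ Euc := Submodule.span ℝ (Set.range (fun u : {u // u ∈ nf} => e ↑u))
    with hWdef
  -- any functional vanishing on the edge directions is constant on P
  have hconst : ∀ l : Euc →L[ℝ] ℝ, (∀ u : Vtx P, u ∈ nf → l (e u) = 0) →
      ∀ x ∈ P, l x = l ↑v := by
    intro l hl
    refine const_of_const_on_nbrs hs v l fun u hu => ?_
    have : l (e u) = 0 := hl u ((hnfmem u).2 hu)
    rw [hedef] at this
    simp only [map_sub] at this
    linarith
  -- the span of the edge directions is everything
  have hWtop : W = ⊤ := by
    have hle : vectorSpan ℝ P ≤ W := by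
      rw [vectorSpan_def]
      refine Submodule.span_le.2 ?_
      intro z hzm
      obtain ⟨a, ha, b, hb, hab⟩ := hzm
      by_contra hz
      set y : Euc := z - (W.orthogonalProjectionOnto z : Euc) with hydef
      have hyW : y ∈ Wᗮ := Submodule.sub_starProjection_mem_orthogonal _
      set l : Euc →L[ℝ] ℝ := innerSL ℝ y with hldef
      have hlW : ∀ w ∈ W, l w = 0 := by
        intro w hw
        rw [hldef]
        simp only [innerSL_apply_apply]
        rw [real_inner_comm]
        exact (Submodule.mem_orthogonal W y).1 hyW w hw
      have hl0 : ∀ u : Vtx P, u ∈ nf → l (e u) = 0 := by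
        intro u hu
        refine hlW _ (Submodule.subset_span ?_)
        exact ⟨⟨u, hu⟩, rfl⟩
      have hconst' := hconst l hl0
      have hlz : l z = 0 := by
        have hzab : z = a - b := by
          first
          | (rw [← hab]; rfl)
          | (rw [hab]; rfl)
        rw [hzab, map_sub, hconst' a ha, hconst' b hb, sub_self]
      have hproj : l ((W.orthogonalProjectionOnto z : Euc)) = 0 :=
        hlW _ (W.orthogonalProjectionOnto z).2
      have hly : l y = 0 := by rw [hydef, map_sub, hlz, hproj, sub_self]
      rw [hldef] at hly
      simp only [innerSL_apply_apply] at hly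
      have hy0 : y = 0 := (inner_self_eq_zero (𝕜 := ℝ)).1 hly
      have hzp : z = (W.orthogonalProjectionOnto z : Euc) := by
        have h0 := hy0
        rw [hydef] at h0
        exact sub_eq_zero.1 h0
      refine hz ?_
      rw [hzp]
      exact (W.orthogonalProjectionOnto z).2
    have hvs : vectorSpan ℝ P = ⊤ := by
      refine Submodule.eq_top_of_finrank_eq ?_
      rw [finrank_euclideanSpace_fin]
      exact hdim
    rw [hvs] at hle
    exact le_antisymm le_top hle
  -- the basis of edge directions
  have hcard' : Fintype.card {u // u ∈ nf} = Module.finrank ℝ Euc := by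
    rw [Fintype.card_coe, hcard, finrank_euclideanSpace_fin]
  have hspan : ⊤ ≤ Submodule.span ℝ (Set.range (fun u : {u // u ∈ nf} => e ↑u)) := by
    rw [← hWdef, hWtop]
  have hind := linearIndependent_of_top_le_span_of_card_eq_finrank hspan hcard'
  set bb : Module.Basis {u // u ∈ nf} ℝ Euc := Module.Basis.mk hind hspan with hbbdef
  have hbbu : ∀ u : {u // u ∈ nf}, bb u = e ↑u := by
    intro u; rw [hbbdef, Module.Basis.mk_apply]
  -- the dual functional
  set lS₀ : Euc →ₗ[ℝ] ℝ :=
    bb.constr ℝ (fun u : {u // u ∈ nf} => if (↑u : Vtx P) ∈ S then (0:ℝ) else -1) with hlS₀def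
  set lS : Euc →L[ℝ] ℝ := LinearMap.toContinuousLinearMap lS₀ with hlSdef
  have hlSval : ∀ z : Euc, lS z = lS₀ z := fun z => rfl
  have hlSe : ∀ u : Vtx P, (hu : u ∈ nf) →
      lS (e u) = if u ∈ S then (0:ℝ) else -1 := by
    intro u hu
    rw [hlSval, hlS₀def]
    have : e u = bb ⟨u, hu⟩ := (hbbu ⟨u, hu⟩).symm
    rw [this, Module.Basis.constr_basis]
  have hlSdiff : ∀ u : Vtx P, lS ↑u - lS ↑v = lS (e u) := by
    intro u; rw [hedef]; simp only [map_sub]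
  -- lS is maximized at v
  have hvexp : IsExposed ℝ (convexHull ℝ (↑s : Set Euc)) {(v : Euc)} := by
    rw [← hs]; exact v.2
  have hlSmax : ∀ x ∈ P, lS x ≤ lS ↑v := by
    intro x hx
    refine local_global hvexp lS ?_ x (by rw [← hs]; exact hx)
    intro w hw hseg hwv
    rw [← hs] at hw hseg
    have hwP : IsFace P {w} := hw
    have hsegP : IsFace P (segment ℝ (↑v) w) := hseg
    have hadj : (polyGraph P).Adj v ⟨w, hwP⟩ :=
      ⟨fun hEq => hwv (congrArg Subtype.val hEq).symm, hsegP⟩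
    have hule := hlSe ⟨w, hwP⟩ ((hnfmem ⟨w, hwP⟩).2 hadj)
    have hdi := hlSdiff ⟨w, hwP⟩
    rw [hule] at hdi
    have this : lS w - lS ↑v = if (⟨w, hwP⟩ : Vtx P) ∈ S then (0:ℝ) else -1 := hdi
    split_ifs at this with hcase
    · linarith
    · linarith
  -- the candidate face
  set G₀ : Set Euc := {x ∈ P | ∀ y ∈ P, lS y ≤ lS x} with hG₀def
  have hG₀face : IsFace P G₀ := fun _ => ⟨lS, rfl⟩
  have hvG₀ : (v : Euc) ∈ G₀ := ⟨hvP, hlSmax⟩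
  have hG₀char : ∀ x ∈ P, (x ∈ G₀ ↔ lS x = lS ↑v) := by
    intro x hx
    constructor
    · intro hxG
      exact le_antisymm (hlSmax x hx) (hxG.2 ↑v hvP)
    · intro hEq
      exact ⟨hx, fun y hy => hEq ▸ hlSmax y hy⟩
  -- the neighbors of v in G₀ are exactly S
  have hAG₀ : A P G₀ v = S := by
    ext u
    constructor
    · rintro ⟨hadj, huG₀⟩
      have huP : (u : Euc) ∈ P := u.2.subset rfl
      have h1 : lS ↑u = lS ↑v := (hG₀char ↑u huP).1 huG₀
      have h2 := hlSdiff u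
      rw [h1, sub_self] at h2
      have h3 := hlSe u ((hnfmem u).2 hadj)
      rw [← h2] at h3
      by_contra huS
      rw [if_neg huS] at h3
      norm_num at h3
    · intro huS
      have hadj : (polyGraph P).Adj v u := hS huS
      have huP : (u : Euc) ∈ P := u.2.subset rfl
      refine ⟨hadj, ?_⟩
      have h3 := hlSe u ((hnfmem u).2 hadj)
      rw [if_pos huS] at h3
      have h2 := hlSdiff u
      rw [h3] at h2
      have : lS ↑u = lS ↑v := by linarith
      exact (hG₀char ↑u huP).2 this
  refine ⟨G₀, hG₀face, hvG₀, hAG₀, ?_⟩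
  -- uniqueness
  intro F hF hvF hAF
  have hFP : F ⊆ P := hF.subset
  -- Step 1: F ⊆ G₀
  have hFG₀ : F ⊆ G₀ := by
    obtain ⟨sF, hsF⟩ := face_isPolytope ⟨s, hs⟩ hF
    have hvFexp : IsExposed ℝ (convexHull ℝ (↑sF : Set Euc)) {(v : Euc)} := by
      rw [← hsF]
      exact isExposed_mono v.2 (Set.singleton_subset_iff.2 hvF) hFP
    intro x hxF
    have hxP : x ∈ P := hFP hxF
    have hprem : ∀ w : Euc, IsExposed ℝ (convexHull ℝ (↑sF : Set Euc)) {w} →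
        IsExposed ℝ (convexHull ℝ (↑sF : Set Euc)) (segment ℝ (↑v) w) → w ≠ ↑v →
        (-lS) w ≤ (-lS) ↑v := by
      intro w hw hseg hwv
      have hwF : IsFace F {w} := by rw [hsF]; exact hw
      have hsegF : IsFace F (segment ℝ (↑v) w) := by rw [hsF]; exact hseg
      have hwP : IsFace P {w} := isFace_trans ⟨s, hs⟩ hF hwF
      have hsegP : IsFace P (segment ℝ (↑v) w) := isFace_trans ⟨s, hs⟩ hF hsegF
      have hadj : (polyGraph P).Adj v ⟨w, hwP⟩ :=
        ⟨fun hEq => hwv (congrArg Subtype.val hEq).symm, hsegP⟩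
      have hwinF : w ∈ F := hwF.subset rfl
      have huA : (⟨w, hwP⟩ : Vtx P) ∈ A P F v := ⟨hadj, hwinF⟩
      rw [hAF] at huA
      have h3 := hlSe ⟨w, hwP⟩ ((hnfmem ⟨w, hwP⟩).2 hadj)
      rw [if_pos huA] at h3
      have h2 : lS w - lS ↑v = lS (e ⟨w, hwP⟩) := hlSdiff ⟨w, hwP⟩
      rw [h3] at h2
      simp only [ContinuousLinearMap.neg_apply]
      linarith
    have hge : lS ↑v ≤ lS x := by
      have hloc := local_global hvFexp (-lS) hprem x (by rw [← hsF]; exact hxF)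
      simp only [ContinuousLinearMap.neg_apply] at hloc
      linarith
    exact (hG₀char x hxP).2 (le_antisymm (hlSmax x hxP) hge)
  -- Step 2: G₀ ⊆ F
  have hG₀P : G₀ ⊆ P := hG₀face.subset
  have hG₀F : G₀ ⊆ F := by
    have hFexpG₀ : IsExposed ℝ G₀ F := isExposed_mono hF hFG₀ hG₀P
    obtain ⟨l', hl'⟩ := hFexpG₀ ⟨↑v, hvF⟩
    have hvmem' : (↑v : Euc) ∈ {x ∈ G₀ | ∀ y ∈ G₀, l' y ≤ l' x} := hl' ▸ hvF
    have hl'max : ∀ z ∈ G₀, l' z ≤ l' ↑v := hvmem'.2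
    obtain ⟨sG, hsG⟩ := face_isPolytope ⟨s, hs⟩ hG₀face
    have hvG₀exp : IsExposed ℝ (convexHull ℝ (↑sG : Set Euc)) {(v : Euc)} := by
      rw [← hsG]
      exact isExposed_mono v.2 (Set.singleton_subset_iff.2 hvG₀) hG₀P
    have hprem : ∀ w : Euc, IsExposed ℝ (convexHull ℝ (↑sG : Set Euc)) {w} →
        IsExposed ℝ (convexHull ℝ (↑sG : Set Euc)) (segment ℝ (↑v) w) → w ≠ ↑v →
        (-l') w ≤ (-l') ↑v := by
      intro w hw hseg hwv
      have hwG : IsFace G₀ {w} := by rw [hsG]; exact hw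
      have hsegG : IsFace G₀ (segment ℝ (↑v) w) := by rw [hsG]; exact hseg
      have hwP : IsFace P {w} := isFace_trans ⟨s, hs⟩ hG₀face hwG
      have hsegP : IsFace P (segment ℝ (↑v) w) := isFace_trans ⟨s, hs⟩ hG₀face hsegG
      have hadj : (polyGraph P).Adj v ⟨w, hwP⟩ :=
        ⟨fun hEq => hwv (congrArg Subtype.val hEq).symm, hsegP⟩
      have hwinG₀ : w ∈ G₀ := hwG.subset rfl
      have huA : (⟨w, hwP⟩ : Vtx P) ∈ A P G₀ v := ⟨hadj, hwinG₀⟩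
      rw [hAG₀] at huA
      have huAF : (⟨w, hwP⟩ : Vtx P) ∈ A P F v := by rw [hAF]; exact huA
      have hwinF : w ∈ F := huAF.2
      have humem : w ∈ {x ∈ G₀ | ∀ y ∈ G₀, l' y ≤ l' x} := by rw [← hl']; exact hwinF
      have : l' ↑v ≤ l' w := humem.2 ↑v hvG₀
      simp only [ContinuousLinearMap.neg_apply]
      linarith
    intro x hxG₀
    have hge : l' ↑v ≤ l' x := by
      have hloc := local_global hvG₀exp (-l') hprem x (by rw [← hsG]; exact hxG₀)
      simp only [ContinuousLinearMap.neg_apply] at hloc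
      linarith
    rw [hl']
    exact ⟨hxG₀, fun y hy => (hl'max y hy).trans hge⟩
  exact Set.Subset.antisymm hFG₀ hG₀F

/-- GEOMETRY: uniqueness of the face spanned at a vertex. -/
lemma geom_inj' {P : Set Euc} (hP : IsSimplePolytope P)
    {F₁ F₂ : Set Euc} (h1 : IsFace P F₁) (h2 : IsFace P F₂)
    (v : Vtx P) (hv1 : v ∈ faceVerts P F₁) (hv2 : v ∈ faceVerts P F₂)
    (hA : A P F₁ v = A P F₂ v) : F₁ = F₂ := by
  have hS : A P F₁ v ⊆ (polyGraph P).neighborSet v := fun u hu => hu.1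
  obtain ⟨G₀, _, _, _, huniq⟩ := face_determined hP v (A P F₁ v) hS
  rw [huniq F₁ h1 hv1 rfl, huniq F₂ h2 hv2 hA.symm]

/-- GEOMETRY: existence of the face spanned at a vertex. -/
lemma geom_surj' {P : Set Euc} (hP : IsSimplePolytope P)
    (v : Vtx P) (S : Set (Vtx P)) (hS : ∀ u ∈ S, (polyGraph P).Adj v u) :
    ∃ F, IsFace P F ∧ v ∈ faceVerts P F ∧ A P F v = S := by
  obtain ⟨G₀, hface, hv, hA, _⟩ := face_determined hP v S hS
  exact ⟨G₀, hface, hv, hA⟩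



end Stmt18

namespace Stmt18

open Finset

/-- GEOMETRY: a polytope has finitely many faces. -/
lemma geom_finite {d : ℕ} {P : Set (EuclideanSpace ℝ (Fin d))} (hP : IsSimplePolytope P) :
    {F : Set (EuclideanSpace ℝ (Fin d)) | IsFace P F ∧ F.Nonempty}.Finite :=
  geom_finite' hP.1

/-- GEOMETRY: every nonempty face contains a vertex. -/
lemma geom_vertex {d : ℕ} {P : Set (EuclideanSpace ℝ (Fin d))} (hP : IsSimplePolytope P)
    {F : Set (EuclideanSpace ℝ (Fin d))} (hF : IsFace P F) (hne : F.Nonempty) :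
    (faceVerts P F).Nonempty :=
  geom_vertex' hP.1 hF hne

/-- GEOMETRY: in a simple polytope, a nonempty face is determined by one of its
vertices together with the set of neighbors of that vertex inside it. -/
lemma geom_inj {d : ℕ} {P : Set (EuclideanSpace ℝ (Fin d))} (hP : IsSimplePolytope P)
    {F₁ F₂ : Set (EuclideanSpace ℝ (Fin d))} (h1 : IsFace P F₁) (h2 : IsFace P F₂)
    (v : Vtx P) (hv1 : v ∈ faceVerts P F₁) (hv2 : v ∈ faceVerts P F₂)
    (hA : A P F₁ v = A P F₂ v) : F₁ = F₂ :=
  geom_inj' hP h1 h2 v hv1 hv2 hA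

/-- GEOMETRY: in a simple polytope, every set of neighbors of a vertex `v` spans a
face whose set of neighbors of `v` is exactly the given set. -/
lemma geom_surj {d : ℕ} {P : Set (EuclideanSpace ℝ (Fin d))} (hP : IsSimplePolytope P)
    (v : Vtx P) (S : Set (Vtx P)) (hS : ∀ u ∈ S, (polyGraph P).Adj v u) :
    ∃ F, IsFace P F ∧ v ∈ faceVerts P F ∧ A P F v = S :=
  geom_surj' hP v S hS

lemma exists_sink {V : Type*} [Finite V] {O : V → V → Prop} (hac : AcyclicOrientation O)
    {W : Set V} (hW : W.Nonempty) : ∃ v, IsSinkOn O W v := by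
  haveI : IsTrans V (flip (Relation.TransGen O)) :=
    ⟨fun _ _ _ h1 h2 => Relation.TransGen.trans h2 h1⟩
  haveI : IsIrrefl V (flip (Relation.TransGen O)) := ⟨fun a h => hac a h⟩
  obtain ⟨m, hm, hmin⟩ :=
    (Finite.wellFounded_of_trans_of_irrefl (flip (Relation.TransGen O))).has_min W hW
  exact ⟨m, hm, fun u hu hO => hmin u hu (Relation.TransGen.single hO)⟩

lemma filter_card_one_iff {α : Type*} [Fintype α] (p : α → Prop) [DecidablePred p] :
    (Finset.univ.filter p).card = 1 ↔ ∃! a, p a := by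
  rw [Finset.card_eq_one]
  constructor
  · rintro ⟨a, ha⟩
    refine ⟨a, ?_, fun b hb => ?_⟩
    · have h : a ∈ Finset.univ.filter p := ha ▸ Finset.mem_singleton_self a
      exact (Finset.mem_filter.1 h).2
    · have h : b ∈ ({a} : Finset α) := ha ▸ Finset.mem_filter.2 ⟨Finset.mem_univ _, hb⟩
      exact Finset.mem_singleton.1 h
  · rintro ⟨a, ha, hu⟩
    refine ⟨a, Finset.ext fun b => ?_⟩
    simp only [Finset.mem_filter, Finset.mem_univ, true_and, Finset.mem_singleton]
    exact ⟨fun h => hu b h, fun h => h ▸ ha⟩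

end Stmt18

/-- For every acyclic orientation `O` of the graph of a simple `d`-polytope,
`H(O) = Σ_{i=0}^d h_i(O)·2^i` is at least the number of nonempty faces of `P`, with
equality iff `O` is an AOF-orientation. -/
theorem stmt_18 {d : ℕ} (P : Set (EuclideanSpace ℝ (Fin d))) [Fintype (Vtx P)]
    (hP : IsSimplePolytope P)
    (O : Vtx P → Vtx P → Prop) (hor : IsOrientation (polyGraph P) O)
    (hac : AcyclicOrientation O) :
    {F : Set (EuclideanSpace ℝ (Fin d)) | IsFace P F ∧ F.Nonempty}.ncard ≤
        ∑ i ∈ Finset.range (d + 1), hNum O i * 2 ^ i ∧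
      (∑ i ∈ Finset.range (d + 1), hNum O i * 2 ^ i =
          {F : Set (EuclideanSpace ℝ (Fin d)) | IsFace P F ∧ F.Nonempty}.ncard ↔
        IsAOF P O) := by
  classical
  set 𝔉 := {F : Set (EuclideanSpace ℝ (Fin d)) | IsFace P F ∧ F.Nonempty} with h𝔉
  have hFin : 𝔉.Finite := Stmt18.geom_finite hP
  set 𝔽 : Finset (Set (EuclideanSpace ℝ (Fin d))) := hFin.toFinset with h𝔽
  have hmem : ∀ F, F ∈ 𝔽 ↔ IsFace P F ∧ F.Nonempty := by
    intro F; rw [h𝔽, Set.Finite.mem_toFinset]; rfl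
  -- in-degrees are at most d
  have hindeg : ∀ v : Vtx P, inDeg O v ≤ d := by
    intro v
    have hsub : {u | O u v} ⊆ (polyGraph P).neighborSet v := fun u hu => (hor.1 u v hu).symm
    exact le_of_le_of_eq (Set.ncard_le_ncard hsub (Set.toFinite _)) (hP.2.2 v)
  -- the H-sum equals the sum of 2^indeg over vertices
  have hH : ∑ i ∈ Finset.range (d + 1), hNum O i * 2 ^ i = ∑ v : Vtx P, 2 ^ inDeg O v := by
    have hnum : ∀ i, hNum O i = (Finset.univ.filter (fun v : Vtx P => inDeg O v = i)).card := by
      intro i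
      rw [hNum, ← Set.ncard_coe_finset]
      congr 1
      ext v; simp
    calc ∑ i ∈ Finset.range (d + 1), hNum O i * 2 ^ i
        = ∑ i ∈ Finset.range (d + 1),
            ∑ v ∈ Finset.univ.filter (fun v : Vtx P => inDeg O v = i), 2 ^ inDeg O v := by
          refine Finset.sum_congr rfl fun i _ => ?_
          rw [hnum i, Finset.sum_congr rfl
            (fun v hv => by rw [(Finset.mem_filter.1 hv).2]), Finset.sum_const,
            smul_eq_mul]
      _ = ∑ v ∈ Finset.univ.filter
            (fun v : Vtx P => inDeg O v ∈ Finset.range (d + 1)), 2 ^ inDeg O v :=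
          Finset.sum_fiberwise_eq_sum_filter _ _ _ _
      _ = ∑ v : Vtx P, 2 ^ inDeg O v := by
          rw [Finset.filter_true_of_mem]
          intro v _
          exact Finset.mem_range.2 (Nat.lt_succ_of_le (hindeg v))
  -- per-vertex count of faces of which v is a sink
  have hvcount : ∀ v : Vtx P,
      (𝔽.filter (fun F => IsSinkOn O (faceVerts P F) v)).card = 2 ^ inDeg O v := by
    intro v
    have hInv : (Finset.univ.filter (fun u : Vtx P => O u v)).card = inDeg O v := by
      rw [inDeg, ← Set.ncard_coe_finset]
      congr 1; ext u; simp
    rw [← hInv, ← Finset.card_powerset]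
    refine Finset.card_bij
      (fun F _ => Finset.univ.filter (fun u : Vtx P => u ∈ Stmt18.A P F v)) ?_ ?_ ?_
    · -- maps into the powerset
      rintro F hF
      obtain ⟨hF𝔽, hsink⟩ := Finset.mem_filter.1 hF
      refine Finset.mem_powerset.2 fun u hu => ?_
      obtain ⟨hadj, hmemF⟩ := (Finset.mem_filter.1 hu).2
      refine Finset.mem_filter.2 ⟨Finset.mem_univ _, ?_⟩
      have hnotvu : ¬ O v u := hsink.2 u hmemF
      by_contra huv
      exact hnotvu ((hor.2 v u hadj).2 huv)
    · -- injective
      rintro F₁ hF₁ F₂ hF₂ heq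
      replace heq : Finset.univ.filter (fun u : Vtx P => u ∈ Stmt18.A P F₁ v)
          = Finset.univ.filter (fun u : Vtx P => u ∈ Stmt18.A P F₂ v) := heq
      obtain ⟨hF₁𝔽, hsink₁⟩ := Finset.mem_filter.1 hF₁
      obtain ⟨hF₂𝔽, hsink₂⟩ := Finset.mem_filter.1 hF₂
      refine Stmt18.geom_inj hP ((hmem F₁).1 hF₁𝔽).1 ((hmem F₂).1 hF₂𝔽).1 v hsink₁.1 hsink₂.1 ?_
      ext u
      constructor
      · intro hu
        have : u ∈ Finset.univ.filter (fun u : Vtx P => u ∈ Stmt18.A P F₂ v) := by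
          rw [← heq]; exact Finset.mem_filter.2 ⟨Finset.mem_univ _, hu⟩
        exact (Finset.mem_filter.1 this).2
      · intro hu
        have : u ∈ Finset.univ.filter (fun u : Vtx P => u ∈ Stmt18.A P F₁ v) := by
          rw [heq]; exact Finset.mem_filter.2 ⟨Finset.mem_univ _, hu⟩
        exact (Finset.mem_filter.1 this).2
    · -- surjective
      rintro S hS
      have hSsub := Finset.mem_powerset.1 hS
      have hSadj : ∀ u ∈ (S : Set (Vtx P)), (polyGraph P).Adj v u := by
        intro u hu
        have : O u v := (Finset.mem_filter.1 (hSsub hu)).2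
        exact (hor.1 u v this).symm
      obtain ⟨F, hface, hvF, hAF⟩ := Stmt18.geom_surj hP v (S : Set (Vtx P)) hSadj
      have hsink : IsSinkOn O (faceVerts P F) v := by
        refine ⟨hvF, fun u hu hOvu => ?_⟩
        have hadj : (polyGraph P).Adj v u := hor.1 v u hOvu
        have huA : u ∈ Stmt18.A P F v := ⟨hadj, hu⟩
        rw [hAF] at huA
        have hOuv : O u v := (Finset.mem_filter.1 (hSsub huA)).2
        exact ((hor.2 v u hadj).1 hOvu) hOuv
      refine ⟨F, Finset.mem_filter.2 ⟨(hmem F).2 ⟨hface, ⟨v, hvF⟩⟩, hsink⟩, ?_⟩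
      ext u
      simp only [Finset.mem_filter, Finset.mem_univ, true_and]
      rw [hAF]
      exact ⟨fun h => h, fun h => h⟩
  -- double counting
  have hswap : ∑ v : Vtx P, (𝔽.filter (fun F => IsSinkOn O (faceVerts P F) v)).card
      = ∑ F ∈ 𝔽, (Finset.univ.filter (fun v : Vtx P => IsSinkOn O (faceVerts P F) v)).card := by
    simp_rw [Finset.card_filter]
    exact Finset.sum_comm
  have key : ∑ i ∈ Finset.range (d + 1), hNum O i * 2 ^ i
      = ∑ F ∈ 𝔽, (Finset.univ.filter (fun v : Vtx P => IsSinkOn O (faceVerts P F) v)).card := by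
    rw [hH, ← hswap]
    exact Finset.sum_congr rfl fun v _ => (hvcount v).symm
  -- every nonempty face has at least one sink
  have honele : ∀ F ∈ 𝔽,
      1 ≤ (Finset.univ.filter (fun v : Vtx P => IsSinkOn O (faceVerts P F) v)).card := by
    intro F hF
    obtain ⟨hface, hne⟩ := (hmem F).1 hF
    obtain ⟨v, hv⟩ := Stmt18.exists_sink hac (Stmt18.geom_vertex hP hface hne)
    exact Finset.card_pos.2 ⟨v, Finset.mem_filter.2 ⟨Finset.mem_univ _, hv⟩⟩
  have hNcard : 𝔉.ncard = 𝔽.card := Set.ncard_eq_toFinset_card 𝔉 hFin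
  constructor
  · -- inequality
    calc 𝔉.ncard = ∑ F ∈ 𝔽, 1 := by rw [hNcard, Finset.card_eq_sum_ones]
      _ ≤ ∑ F ∈ 𝔽, (Finset.univ.filter (fun v : Vtx P => IsSinkOn O (faceVerts P F) v)).card :=
          Finset.sum_le_sum honele
      _ = ∑ i ∈ Finset.range (d + 1), hNum O i * 2 ^ i := key.symm
  · constructor
    · intro heq
      refine ⟨hor, hac, fun F hface hne => ?_⟩
      have hF𝔽 : F ∈ 𝔽 := (hmem F).2 ⟨hface, hne⟩
      have hsum : ∑ F ∈ 𝔽, (1 : ℕ)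
          = ∑ F ∈ 𝔽, (Finset.univ.filter (fun v : Vtx P => IsSinkOn O (faceVerts P F) v)).card := by
        rw [← Finset.card_eq_sum_ones, ← hNcard, ← heq, key]
      have hall := (Finset.sum_eq_sum_iff_of_le honele).1 hsum
      have h1 := (hall F hF𝔽).symm
      exact (Stmt18.filter_card_one_iff _).1 h1
    · rintro ⟨-, -, haof⟩
      rw [key, hNcard, Finset.card_eq_sum_ones]
      refine Finset.sum_congr rfl fun F hF => ?_
      obtain ⟨hface, hne⟩ := (hmem F).1 hF
      exact (Stmt18.filter_card_one_iff _).2 (haof F hface hne)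
end
end
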